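/- arXiv:1612.03234 — 6 statements merged into one kernel-verified Lean document; each statement's English description precedes it below -/
import Mathlib

section
/- If G is a germ, then no vector p ∈ G can have an entry whose value exceeds 1/d: for every p ∈ G and every index i, p(i) ≤ 1/d. -/
noncomputable section

/- Ambient space: ℝ^(d²) with the standard inner product. -/
abbrev V (d : ℕ) := EuclideanSpace ℝ (Fin (d^2))

/-- The standard inner product ⟨u, v⟩ = ∑ i, u i * v i. -/
def ip {d : ℕ} (u v : V d) : ℝ := inner ℝ u v

/-- The barycenter c, with all entries equal to 1/d². -/
def cpt (d : ℕ) : V d := WithLp.toLp 2 (fun _ => 1/(d^2:ℝ))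

/-- The hyperplane H = {u : ⟨u, c⟩ = 1/d²} of vectors whose entries sum to 1. -/
def Hs (d : ℕ) : Set (V d) := {u | ip u (cpt d) = 1/(d^2:ℝ)}

/-- The polar A* = {u ∈ H : ⟨u, v⟩ ≥ 1/(d(d+1)) for all v ∈ A}. -/
def polar (d : ℕ) (A : Set (V d)) : Set (V d) :=
  {u | u ∈ Hs d ∧ ∀ v ∈ A, 1/((d:ℝ)*((d:ℝ)+1)) ≤ ip u v}

/-- cc(A): the closed convex hull of A. -/
def cc (d : ℕ) (A : Set (V d)) : Set (V d) := closure (convexHull ℝ A)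

/-- The probability simplex Δ = {u ∈ H : u i ≥ 0 for all i}. -/
def probSimplex (d : ℕ) : Set (V d) := {u | u ∈ Hs d ∧ ∀ i, 0 ≤ u i}

/-- The basis distributions e_k, with e_k(i) = (δ_{ki} + 1/d)/(d+1). -/
def basisDist (d : ℕ) (k : Fin (d^2)) : V d :=
  WithLp.toLp 2 (fun i => ((if k = i then (1:ℝ) else 0) + 1/(d:ℝ)) / ((d:ℝ)+1))

/-- The basis simplex Δ_e: the convex hull of the basis distributions. -/
def basisSimplex (d : ℕ) : Set (V d) := convexHull ℝ (Set.range (basisDist d))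

/-- The out-ball B_o = {u ∈ H : ⟨u, u⟩ ≤ 2/(d(d+1))}. -/
def outBall (d : ℕ) : Set (V d) := {u | u ∈ Hs d ∧ ip u u ≤ 2/((d:ℝ)*((d:ℝ)+1))}

/-- The out-sphere S_o = {u ∈ H : ⟨u, u⟩ = 2/(d(d+1))}. -/
def outSphere (d : ℕ) : Set (V d) := {u | u ∈ Hs d ∧ ip u u = 2/((d:ℝ)*((d:ℝ)+1))}

/-- The in-ball B_i = {u ∈ H : ‖u − c‖² ≤ 1/(d²(d²−1))}. -/
def inBall (d : ℕ) : Set (V d) :=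
  {u | u ∈ Hs d ∧ ‖u - cpt d‖^2 ≤ 1/((d:ℝ)^2*((d:ℝ)^2-1))}

/-- The in-sphere S_i = {u ∈ H : ‖u − c‖² = 1/(d²(d²−1))}. -/
def inSphere (d : ℕ) : Set (V d) :=
  {u | u ∈ Hs d ∧ ‖u - cpt d‖^2 = 1/((d:ℝ)^2*((d:ℝ)^2-1))}

/-- The mid-ball B_m = {u ∈ H : ‖u − c‖² ≤ 1/(d²(d+1))}. -/
def midBall (d : ℕ) : Set (V d) :=
  {u | u ∈ Hs d ∧ ‖u - cpt d‖^2 ≤ 1/((d:ℝ)^2*((d:ℝ)+1))}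

/-- A germ: a subset of Δ whose pairwise inner products satisfy the
fundamental inequalities 1/(d(d+1)) ≤ ⟨p, s⟩ ≤ 2/(d(d+1)). -/
def IsGerm (d : ℕ) (G : Set (V d)) : Prop :=
  G ⊆ probSimplex d ∧
  ∀ p ∈ G, ∀ s ∈ G, 1/((d:ℝ)*((d:ℝ)+1)) ≤ ip p s ∧ ip p s ≤ 2/((d:ℝ)*((d:ℝ)+1))

/-- A qplex: a self-polar subset of Δ ∩ B_o. -/
def IsQplex (d : ℕ) (Q : Set (V d)) : Prop :=
  Q ⊆ probSimplex d ∩ outBall d ∧ Q = polar d Q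

/-- Action of a d²×d² matrix on a vector: (R u)(i) = ∑ j, R i j * u j. -/
def mvec (d : ℕ) (R : Matrix (Fin (d^2)) (Fin (d^2)) ℝ) (u : V d) : V d :=
  WithLp.toLp 2 (fun i => ∑ j, R i j * u j)

/-- no vector in a germ has an entry exceeding 1/d. -/
theorem statement3 (d : ℕ) (hd : 2 ≤ d) (G : Set (V d)) (hG : IsGerm d G)
    (p : V d) (hp : p ∈ G) (i : Fin (d^2)) :
    p i ≤ 1/(d:ℝ) := by
  obtain ⟨hsub, hineq⟩ := hG
  obtain ⟨hH, hpos⟩ := hsub hp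
  have hupp := (hineq p hp p hp).2
  have hd' : (2:ℝ) ≤ (d:ℝ) := by exact_mod_cast hd
  have hdpos : (0:ℝ) < d := by linarith
  have hsum : ∑ j, p j = 1 := by
    have h1 : ip p (cpt d) = 1/(d^2:ℝ) := hH
    have h2 : ip p (cpt d) = (∑ j, p j) * (1/(d^2:ℝ)) := by
      simp [ip, cpt, PiLp.inner_apply, Finset.sum_mul, mul_comm]
    rw [h2] at h1
    have hd2 : (d:ℝ)^2 ≠ 0 := by positivity
    field_simp at h1
    linarith
  have hipp : ip p p = ∑ j, (p j)^2 := by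
    rw [ip, PiLp.inner_apply]
    simp [sq]
  set t := p i with ht
  have htnn : 0 ≤ t := hpos i
  have hrest : ∑ j ∈ Finset.univ.erase i, p j = 1 - t := by
    rw [Finset.sum_erase_eq_sub (Finset.mem_univ i), hsum]
  have hone : 1 ≤ d^2 := by nlinarith
  have hcard : ((Finset.univ.erase i).card : ℝ) = (d:ℝ)^2 - 1 := by
    rw [Finset.card_erase_of_mem (Finset.mem_univ i)]
    simp only [Finset.card_univ, Fintype.card_fin]
    push_cast [Nat.cast_sub hone]
    ring
  have hCS : (1-t)^2 ≤ ((d:ℝ)^2 - 1) * ∑ j ∈ Finset.univ.erase i, (p j)^2 := by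
    have h := sq_sum_le_card_mul_sum_sq (s := Finset.univ.erase i) (f := p)
    rw [hrest, hcard] at h
    exact h
  have hsplit : ∑ j, (p j)^2 = t^2 + ∑ j ∈ Finset.univ.erase i, (p j)^2 := by
    rw [← Finset.sum_erase_add Finset.univ _ (Finset.mem_univ i)]
    ring
  rw [hipp, hsplit] at hupp
  set R := ∑ j ∈ Finset.univ.erase i, (p j)^2 with hR
  have hfac : (0:ℝ) < (d:ℝ)^2 - 1 := by nlinarith
  have h2 : ((d:ℝ)^2-1)*(t^2 + R) ≤ ((d:ℝ)^2-1)*(2/((d:ℝ)*((d:ℝ)+1))) :=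
    mul_le_mul_of_nonneg_left hupp (le_of_lt hfac)
  have h3 : ((d:ℝ)^2-1)*(2/((d:ℝ)*((d:ℝ)+1))) = 2*((d:ℝ)-1)/(d:ℝ) := by
    field_simp
    ring
  rw [h3] at h2
  have hclean : (d:ℝ)*((d:ℝ)+1)*(t^2+R) ≤ 2 := by
    have hdd1 : (0:ℝ) < (d:ℝ)*((d:ℝ)+1) := by positivity
    rw [div_eq_mul_inv] at hupp
    calc (d:ℝ)*((d:ℝ)+1)*(t^2+R) ≤ (d:ℝ)*((d:ℝ)+1)*(2 * ((d:ℝ)*((d:ℝ)+1))⁻¹) :=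
          mul_le_mul_of_nonneg_left hupp hdd1.le
      _ = 2 := by field_simp
  by_contra hcon
  push_neg at hcon
  have hcon2 : 1 < (d:ℝ)*t := by
    rw [div_lt_iff₀ hdpos] at hcon; linarith [mul_comm t (d:ℝ)]
  have h5 : (0:ℝ) < (d:ℝ)*((d:ℝ)*t) - (2-(d:ℝ)) := by nlinarith
  nlinarith [mul_le_mul_of_nonneg_left hclean (by linarith : (0:ℝ) ≤ (d:ℝ)-1),
    mul_le_mul_of_nonneg_left hCS hdpos.le,
    mul_pos (sub_pos.mpr hcon2) h5]
end
end

section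
/- If G is a germ and p ∈ G, then the number of indices i with p(i) = 0 is at most d(d−1)/2. -/
noncomputable section

lemma sum_eq_one {d : ℕ} (hd : 0 < d) (p : V d) (hp : ip p (cpt d) = 1/(d^2:ℝ)) :
    ∑ i, p i = 1 := by
  have hd2 : (0:ℝ) < (d:ℝ)^2 := by positivity
  have : ip p (cpt d) = (∑ i, p i) * (1/(d^2:ℝ)) := by
    simp [ip, cpt, PiLp.inner_apply, Finset.sum_mul, RCLike.inner_apply, mul_comm]
  rw [this] at hp
  field_simp at hp
  linarith

/-- a vector in a germ has at most d(d−1)/2 zero entries. -/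
theorem statement4 (d : ℕ) (hd : 2 ≤ d) (G : Set (V d)) (hG : IsGerm d G)
    (p : V d) (hp : p ∈ G) :
    {i : Fin (d^2) | p i = 0}.ncard ≤ d*(d-1)/2 := by
  have hd0 : 0 < d := by omega
  obtain ⟨hsub, hpair⟩ := hG
  obtain ⟨hH, hnn⟩ := hsub hp
  have hsum : ∑ i, p i = 1 := sum_eq_one hd0 p hH
  have hipp : ip p p ≤ 2/((d:ℝ)*((d:ℝ)+1)) := (hpair p hp p hp).2
  have hipp' : ∑ i, p i ^ 2 ≤ 2/((d:ℝ)*((d:ℝ)+1)) := by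
    have : ip p p = ∑ i, p i ^ 2 := by
      simp only [ip, PiLp.inner_apply, RCLike.inner_apply, conj_trivial, sq]
    linarith [this ▸ hipp]
  set Z : Finset (Fin (d^2)) := Finset.univ.filter (fun i => p i = 0) with hZ
  set S : Finset (Fin (d^2)) := Finset.univ.filter (fun i => p i ≠ 0) with hS
  have hset : {i : Fin (d^2) | p i = 0} = ↑Z := by
    ext i; simp [hZ]
  rw [hset, Set.ncard_coe_finset]
  have hcard : Z.card + S.card = d^2 := by
    rw [hZ, hS]
    rw [Finset.card_filter_add_card_filter_not]
    simp
  -- Cauchy–Schwarz on S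
  have hsumS : ∑ i ∈ S, p i = 1 := by
    rw [← hsum]
    apply Finset.sum_subset (Finset.subset_univ S)
    intro i _ hi
    simpa [hS] using hi
  have hCS : (1:ℝ) ≤ S.card * ∑ i ∈ S, p i ^ 2 := by
    have := sq_sum_le_card_mul_sum_sq (s := S) (f := p)
    rw [hsumS] at this; simpa using this
  have hsqS : ∑ i ∈ S, p i ^ 2 ≤ 2/((d:ℝ)*((d:ℝ)+1)) := by
    refine le_trans ?_ hipp'
    apply Finset.sum_le_sum_of_subset_of_nonneg (Finset.subset_univ S)
    intro i _ _; positivity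
  have hdpos : (0:ℝ) < (d:ℝ)*((d:ℝ)+1) := by positivity
  have hSge : (d:ℝ)*((d:ℝ)+1) ≤ 2 * S.card := by
    have hSc : (0:ℝ) ≤ (S.card:ℝ) := by positivity
    have h1 : (1:ℝ) ≤ S.card * (2/((d:ℝ)*((d:ℝ)+1))) :=
      le_trans hCS (by nlinarith)
    rw [le_div_iff₀ hdpos] at *
    nlinarith
  have hSgeN : d*d + d ≤ 2 * S.card := by
    have := hSge
    push_cast at this
    have h2 : ((d*d + d : ℕ) : ℝ) ≤ 2 * S.card := by push_cast; nlinarith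
    exact_mod_cast h2
  have h1 : d^2 = d*d := sq d
  have h3 : d*(d-1) = d*d - d := by rw [Nat.mul_sub, mul_one]
  omega
end
end

section
/- Let A be a subset of Δ ∩ B_o. Then: (1) A is a germ if and only if A ⊆ A*; (2) A is a maximal germ if and only if A = A*. Consequently, the maximal germs are exactly the self-polar subsets of Δ ∩ B_o. -/
noncomputable section

/-- A maximal germ: a germ not properly contained in any other germ. -/
def IsMaximalGerm (d : ℕ) (G : Set (V d)) : Prop :=
  IsGerm d G ∧ ∀ G' : Set (V d), IsGerm d G' → G ⊆ G' → G' = G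

lemma ip_apply {d : ℕ} (u v : V d) : ip u v = ∑ i, u i * v i := by
  simp [ip, PiLp.inner_apply, RCLike.inner_apply, mul_comm]

lemma ip_comm {d : ℕ} (u v : V d) : ip u v = ip v u := (real_inner_comm v u)

lemma ip_self_nonneg {d : ℕ} (u : V d) : 0 ≤ ip u u := real_inner_self_nonneg

lemma ip_cs {d : ℕ} (u v : V d) : ip u v * ip u v ≤ ip u u * ip v v :=
  real_inner_mul_inner_self_le u v

lemma hs_iff {d : ℕ} (hd : (d:ℝ) ≠ 0) (u : V d) : u ∈ Hs d ↔ ∑ i, u i = 1 := by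
  have h2 : ((d:ℝ)^2) ≠ 0 := pow_ne_zero _ hd
  constructor
  · intro h
    have := h
    simp only [Hs, Set.mem_setOf_eq, ip_apply, cpt] at this
    rw [← Finset.sum_mul] at this
    field_simp at this
    linarith
  · intro h
    simp only [Hs, Set.mem_setOf_eq, ip_apply, cpt]
    rw [← Finset.sum_mul, h, one_mul]

lemma cpt_mem_Hs {d : ℕ} (hd : (d:ℝ) ≠ 0) : cpt d ∈ Hs d := by
  rw [hs_iff hd]
  simp [cpt]
  field_simp

lemma ip_center {d : ℕ} (hd : (d:ℝ) ≠ 0) {u v : V d} (hu : u ∈ Hs d) (hv : v ∈ Hs d) :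
    ip u v = 1/(d:ℝ)^2 + ip (u - cpt d) (v - cpt d) := by
  have hcc : ip (cpt d) (cpt d) = 1/(d:ℝ)^2 := cpt_mem_Hs hd
  have huc : ip u (cpt d) = 1/(d:ℝ)^2 := hu
  have hcv : ip (cpt d) v = 1/(d:ℝ)^2 := (ip_comm _ _).trans hv
  simp only [ip] at huc hcv hcc ⊢
  rw [inner_sub_left, inner_sub_right, inner_sub_right, huc, hcv, hcc]
  ring

lemma norm_sq_eq {d : ℕ} (u : V d) : ‖u - cpt d‖^2 = ip (u - cpt d) (u - cpt d) :=
  (real_inner_self_eq_norm_sq _).symm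

lemma ip_self_hs {d : ℕ} (hd : (d:ℝ) ≠ 0) {u : V d} (hu : u ∈ Hs d) :
    ip u u = 1/(d:ℝ)^2 + ‖u - cpt d‖^2 := by
  rw [ip_center hd hu hu, norm_sq_eq]


/-- Cauchy–Schwarz upper bound for two elements of the out-ball. -/
lemma outBall_ip_le {d : ℕ} (hd : 2 ≤ d) {u v : V d}
    (hu : ip u u ≤ 2/((d:ℝ)*((d:ℝ)+1))) (hv : ip v v ≤ 2/((d:ℝ)*((d:ℝ)+1))) :
    ip u v ≤ 2/((d:ℝ)*((d:ℝ)+1)) := by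
  have hD : (2:ℝ) ≤ (d:ℝ) := by exact_mod_cast hd
  have hR : (0:ℝ) < 2/((d:ℝ)*((d:ℝ)+1)) := by positivity
  have h1 := ip_cs u v
  have h2 := ip_self_nonneg u
  have h3 := ip_self_nonneg v
  nlinarith [sq_nonneg (ip u v - 2/((d:ℝ)*((d:ℝ)+1)))]

/-- Lower bound on the self-inner-product of any element of H. -/
lemma hs_ip_self_ge {d : ℕ} (hd : (d:ℝ) ≠ 0) {u : V d} (hu : u ∈ Hs d) :
    1/(d:ℝ)^2 ≤ ip u u := by
  rw [ip_self_hs hd hu]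
  nlinarith [sq_nonneg ‖u - cpt d‖]


lemma basisDist_mem {d : ℕ} (hd : 2 ≤ d) (k : Fin (d^2)) : basisDist d k ∈ probSimplex d := by
  have hD : (2:ℝ) ≤ (d:ℝ) := by exact_mod_cast hd
  have hd0 : (d:ℝ) ≠ 0 := by linarith
  constructor
  · rw [hs_iff hd0]
    simp only [basisDist, PiLp.toLp_apply]
    rw [← Finset.sum_div, Finset.sum_add_distrib, Finset.sum_ite_eq, Finset.sum_const]
    simp only [Finset.mem_univ, if_true, Finset.card_univ, Fintype.card_fin, nsmul_eq_mul]
    push_cast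
    field_simp
    ring
  · intro i
    simp only [basisDist, PiLp.toLp_apply]
    positivity

lemma basisDist_ip {d : ℕ} (hd : 2 ≤ d) (k : Fin (d^2)) {v : V d} (hv : v ∈ Hs d) :
    ip (basisDist d k) v = (v k + 1/(d:ℝ)) / ((d:ℝ)+1) := by
  have hD : (2:ℝ) ≤ (d:ℝ) := by exact_mod_cast hd
  have hd0 : (d:ℝ) ≠ 0 := by linarith
  have hsum : ∑ i, v i = 1 := (hs_iff hd0 v).1 hv
  rw [ip_apply]
  simp only [basisDist, PiLp.toLp_apply]
  have : ∀ i, ((if k = i then (1:ℝ) else 0) + 1/(d:ℝ)) / ((d:ℝ)+1) * v i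
      = (if k = i then v i else 0) / ((d:ℝ)+1) + (1/(d:ℝ)) * v i / ((d:ℝ)+1) := by
    intro i
    by_cases h : k = i <;> simp [h] <;> ring
  rw [Finset.sum_congr rfl (fun i _ => this i), Finset.sum_add_distrib, ← Finset.sum_div,
    Finset.sum_ite_eq]
  simp only [Finset.mem_univ, if_true]
  have : ∑ x : Fin (d^2), 1/(d:ℝ) * v x / ((d:ℝ)+1) = (1/(d:ℝ)) * (∑ x, v x) / ((d:ℝ)+1) := by
    rw [Finset.mul_sum, Finset.sum_div]
  rw [this, hsum]
  ring

lemma basisDist_ip_self {d : ℕ} (hd : 2 ≤ d) (k : Fin (d^2)) :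
    ip (basisDist d k) (basisDist d k) = 2/((d:ℝ)*((d:ℝ)+1)) := by
  have hD : (2:ℝ) ≤ (d:ℝ) := by exact_mod_cast hd
  rw [ip_comm, basisDist_ip hd k (basisDist_mem hd k).1]
  simp only [basisDist, PiLp.toLp_apply, if_pos rfl, eq_self_iff_true, if_true]
  field_simp
  ring

/-- lower bound of basis distribution against a simplex element -/
lemma basisDist_ip_ge {d : ℕ} (hd : 2 ≤ d) (k : Fin (d^2)) {v : V d}
    (hv : v ∈ probSimplex d) : 1/((d:ℝ)*((d:ℝ)+1)) ≤ ip (basisDist d k) v := by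
  have hD : (2:ℝ) ≤ (d:ℝ) := by exact_mod_cast hd
  rw [basisDist_ip hd k hv.1]
  have h1 := hv.2 k
  have h0 : 1/((d:ℝ)*((d:ℝ)+1)) = (1/(d:ℝ))/((d:ℝ)+1) := by
    rw [div_div]
  rw [h0]
  gcongr
  linarith


lemma sub_cpt_apply {d : ℕ} (u : V d) (i : Fin (d^2)) :
    (u - cpt d) i = u i - 1/(d:ℝ)^2 := by simp [cpt]

lemma norm_sub_cpt_sq {d : ℕ} (u : V d) :
    ‖u - cpt d‖^2 = ∑ i, (u i - 1/(d:ℝ)^2)^2 := by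
  rw [norm_sq_eq, ip_apply]
  exact Finset.sum_congr rfl (fun i _ => by rw [sub_cpt_apply]; ring)

lemma coord_bound {n : ℕ} (hn : 1 ≤ n) (w : Fin n → ℝ) (k : Fin n) (r : ℝ)
    (hwsum : ∑ i, w i = 0) (hwsq : ∑ i, (w i)^2 ≤ r) :
    (n:ℝ) * (w k)^2 ≤ ((n:ℝ) - 1) * r := by
  have herase_sum : ∑ i ∈ Finset.univ.erase k, w i = - w k := by
    have := Finset.sum_erase_add Finset.univ w (Finset.mem_univ k)
    linarith
  have herase_sq : ∑ i ∈ Finset.univ.erase k, (w i)^2 = (∑ i, (w i)^2) - (w k)^2 := by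
    have := Finset.sum_erase_add Finset.univ (fun i => (w i)^2) (Finset.mem_univ k)
    linarith
  have hcs := sq_sum_le_card_mul_sum_sq (s := Finset.univ.erase k) (f := w)
  rw [herase_sum, herase_sq, neg_sq] at hcs
  have hcard_e : ((Finset.univ.erase k).card : ℝ) = (n:ℝ) - 1 := by
    rw [Finset.card_erase_of_mem (Finset.mem_univ k), Finset.card_univ, Fintype.card_fin]
    push_cast [Nat.cast_sub hn]
    ring
  rw [hcard_e] at hcs
  have hn1 : (1:ℝ) ≤ (n:ℝ) := by exact_mod_cast hn
  nlinarith [hcs, mul_le_mul_of_nonneg_left hwsq (show (0:ℝ) ≤ (n:ℝ) - 1 by linarith)]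

lemma inBall_subset_prob {d : ℕ} (hd : 2 ≤ d) : inBall d ⊆ probSimplex d := by
  intro u hu
  have hD : (2:ℝ) ≤ (d:ℝ) := by exact_mod_cast hd
  have hd0 : (d:ℝ) ≠ 0 := by linarith
  have hn4 : (4:ℝ) ≤ (d:ℝ)^2 := by nlinarith
  refine ⟨hu.1, fun k => ?_⟩
  have hsum : ∑ i, u i = 1 := (hs_iff hd0 u).1 hu.1
  have hwsum : ∑ i, (u i - 1/(d:ℝ)^2) = 0 := by
    have hconst : ∑ _i : Fin (d^2), (1/(d:ℝ)^2) = 1 := by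
      rw [Finset.sum_const, Finset.card_univ, Fintype.card_fin, nsmul_eq_mul]
      push_cast
      rw [mul_one_div, div_self (pow_ne_zero 2 hd0)]
    rw [Finset.sum_sub_distrib, hsum, hconst, sub_self]
  have hwsq : ∑ i, (u i - 1/(d:ℝ)^2)^2 ≤ 1/((d:ℝ)^2*((d:ℝ)^2-1)) := by
    rw [← norm_sub_cpt_sq]; exact hu.2
  have hn1 : 1 ≤ d^2 := by nlinarith
  have hkey := coord_bound hn1 (fun i => u i - 1/(d:ℝ)^2) k _ hwsum hwsq
  simp only at hkey
  have hcast : ((d^2 : ℕ) : ℝ) = (d:ℝ)^2 := by push_cast; ring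
  rw [hcast] at hkey
  -- hkey : d^2 * (u k - 1/d^2)^2 ≤ (d^2 - 1) * (1/(d^2*(d^2-1)))
  have key : ((d:ℝ)^2-1) * (1/((d:ℝ)^2*((d:ℝ)^2-1))) = 1/(d:ℝ)^2 := by
    have hne2 : ((d:ℝ)^2 - 1) ≠ 0 := by nlinarith
    field_simp
  rw [key] at hkey
  have hinv : (d:ℝ)^2 * (1/(d:ℝ)^2) = 1 := by
    field_simp
  have hz2 : (d:ℝ)^2 * (1/(d:ℝ)^2)^2 = 1/(d:ℝ)^2 := by
    field_simp
  have haz : (d:ℝ)^2 * (u k - 1/(d:ℝ)^2) * (1/(d:ℝ)^2) = u k - 1/(d:ℝ)^2 := by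
    field_simp
  nlinarith [hkey, hz2, haz,
    mul_nonneg (show (0:ℝ) ≤ (d:ℝ)^2 by positivity) (sq_nonneg (u k - 1/(d:ℝ)^2 + 1/(d:ℝ)^2))]

lemma inBall_subset_out {d : ℕ} (hd : 2 ≤ d) : inBall d ⊆ outBall d := by
  intro u hu
  have hD : (2:ℝ) ≤ (d:ℝ) := by exact_mod_cast hd
  have hd0 : (d:ℝ) ≠ 0 := by linarith
  refine ⟨hu.1, ?_⟩
  rw [ip_self_hs hd0 hu.1]
  have h2 := hu.2
  have h4 : (4:ℝ) ≤ (d:ℝ)^2 := by nlinarith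
  have hp1 : (0:ℝ) < (d:ℝ)^2*((d:ℝ)^2-1) :=
    mul_pos (by nlinarith) (by nlinarith)
  have hp2 : (0:ℝ) < (d:ℝ)^2*((d:ℝ)+1) :=
    mul_pos (by nlinarith) (by nlinarith)
  have h1 : 1/((d:ℝ)^2*((d:ℝ)^2-1)) ≤ ((d:ℝ)-1)/((d:ℝ)^2*((d:ℝ)+1)) := by
    rw [div_le_div_iff₀ hp1 hp2]
    nlinarith
  have h3 : 1/(d:ℝ)^2 + ((d:ℝ)-1)/((d:ℝ)^2*((d:ℝ)+1)) = 2/((d:ℝ)*((d:ℝ)+1)) := by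
    field_simp
    ring
  linarith

/-- The fundamental lower bound: inner product of an in-ball element with
an element of Δ ∩ B_o (or indeed anything in H within the out-ball radius). -/
lemma inBall_ip_ge {d : ℕ} (hd : 2 ≤ d) {u v : V d} (hu : u ∈ inBall d)
    (hv : v ∈ Hs d) (hvo : ip v v ≤ 2/((d:ℝ)*((d:ℝ)+1))) :
    1/((d:ℝ)*((d:ℝ)+1)) ≤ ip u v := by
  have hD : (2:ℝ) ≤ (d:ℝ) := by exact_mod_cast hd
  have hd0 : (d:ℝ) ≠ 0 := by linarith
  have hvn : ‖v - cpt d‖^2 ≤ ((d:ℝ)-1)/((d:ℝ)^2*((d:ℝ)+1)) := by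
    have := ip_self_hs hd0 hv
    have h3 : 1/(d:ℝ)^2 + ((d:ℝ)-1)/((d:ℝ)^2*((d:ℝ)+1)) = 2/((d:ℝ)*((d:ℝ)+1)) := by
      field_simp
      ring
    linarith
  rw [ip_center hd0 hu.1 hv]
  have hcs := ip_cs (u - cpt d) (v - cpt d)
  rw [← norm_sq_eq, ← norm_sq_eq] at hcs
  have hprod : ‖u - cpt d‖^2 * ‖v - cpt d‖^2 ≤ (1/((d:ℝ)^2*((d:ℝ)+1)))^2 := by
    have hb : (1/((d:ℝ)^2*((d:ℝ)^2-1))) * (((d:ℝ)-1)/((d:ℝ)^2*((d:ℝ)+1)))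
        = (1/((d:ℝ)^2*((d:ℝ)+1)))^2 := by
      have hne2 : ((d:ℝ)^2 - 1) ≠ 0 := by nlinarith
      have hne3 : ((d:ℝ)+1) ≠ 0 := by nlinarith
      field_simp
      ring
    calc ‖u - cpt d‖^2 * ‖v - cpt d‖^2
        ≤ (1/((d:ℝ)^2*((d:ℝ)^2-1))) * (((d:ℝ)-1)/((d:ℝ)^2*((d:ℝ)+1))) := by
          have h4 : (4:ℝ) ≤ (d:ℝ)^2 := by nlinarith
          have hp1 : (0:ℝ) < (d:ℝ)^2*((d:ℝ)^2-1) :=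
            mul_pos (by nlinarith) (by nlinarith)
          exact mul_le_mul hu.2 hvn (sq_nonneg _) (div_nonneg zero_le_one hp1.le)
      _ = _ := hb
  have hx : -(1/((d:ℝ)^2*((d:ℝ)+1))) ≤ ip (u - cpt d) (v - cpt d) := by
    nlinarith [hcs, hprod, sq_nonneg (ip (u - cpt d) (v - cpt d) + 1/((d:ℝ)^2*((d:ℝ)+1))),
      (show (0:ℝ) < 1/((d:ℝ)^2*((d:ℝ)+1)) by positivity)]
  have harr : 1/((d:ℝ)*((d:ℝ)+1)) = 1/(d:ℝ)^2 - 1/((d:ℝ)^2*((d:ℝ)+1)) := by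
    field_simp
    ring
  linarith

set_option maxHeartbeats 1000000 in
lemma escape {d : ℕ} (hd : 2 ≤ d) {q : V d} (hq : q ∈ Hs d)
    (hqo : 2/((d:ℝ)*((d:ℝ)+1)) < ip q q) :
    ∃ v ∈ inBall d, ip q v < 1/((d:ℝ)*((d:ℝ)+1)) := by
  have hD : (2:ℝ) ≤ (d:ℝ) := by exact_mod_cast hd
  have hd0 : (d:ℝ) ≠ 0 := by linarith
  have h4 : (4:ℝ) ≤ (d:ℝ)^2 := by nlinarith
  obtain ⟨m, hm⟩ : ∃ m : ℝ, m = ‖q - cpt d‖ := ⟨_, rfl⟩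
  have hro : ((d:ℝ)-1)/((d:ℝ)^2*((d:ℝ)+1)) < m^2 := by
    have h5 := ip_self_hs hd0 hq
    have h3 : 1/(d:ℝ)^2 + ((d:ℝ)-1)/((d:ℝ)^2*((d:ℝ)+1)) = 2/((d:ℝ)*((d:ℝ)+1)) := by
      field_simp
      ring
    rw [← hm] at h5
    linarith
  have hm0 : 0 < m := by
    have hpos : (0:ℝ) < ((d:ℝ)-1)/((d:ℝ)^2*((d:ℝ)+1)) :=
      div_pos (by nlinarith) (mul_pos (by nlinarith) (by nlinarith))
    nlinarith [hm ▸ norm_nonneg (q - cpt d), hro, hpos]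
  have hmne : m ≠ 0 := ne_of_gt hm0
  obtain ⟨ri, hri⟩ : ∃ r : ℝ, r = Real.sqrt (1/((d:ℝ)^2*((d:ℝ)^2-1))) := ⟨_, rfl⟩
  have hri2 : ri^2 = 1/((d:ℝ)^2*((d:ℝ)^2-1)) := by
    rw [hri, Real.sq_sqrt (div_nonneg zero_le_one (mul_pos
      (show (0:ℝ) < (d:ℝ)^2 by nlinarith) (show (0:ℝ) < (d:ℝ)^2-1 by nlinarith)).le)]
  have hri0 : 0 < ri := by
    rw [hri]
    exact Real.sqrt_pos.2 (one_div_pos.2 (mul_pos (by nlinarith) (by nlinarith)))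
  refine ⟨cpt d - (ri/m) • (q - cpt d), ?_, ?_⟩
  · constructor
    · show ip _ (cpt d) = _
      have h6 : ip (cpt d - (ri/m) • (q - cpt d)) (cpt d)
          = ip (cpt d) (cpt d) - (ri/m) * (ip q (cpt d) - ip (cpt d) (cpt d)) := by
        simp only [ip, inner_sub_left, real_inner_smul_left, inner_sub_left]
      rw [h6, hq, (cpt_mem_Hs hd0 : ip (cpt d) (cpt d) = _)]
      ring
    · have hsub : cpt d - (ri/m) • (q - cpt d) - cpt d = (-(ri/m)) • (q - cpt d) := by
        module
      rw [hsub, norm_smul, Real.norm_eq_abs, abs_neg, ← hm, mul_pow, sq_abs, div_pow,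
        div_mul_cancel₀ _ (pow_ne_zero 2 hmne), hri2]
  · have hvH : cpt d - (ri/m) • (q - cpt d) ∈ Hs d := by
      show ip _ (cpt d) = _
      have h6 : ip (cpt d - (ri/m) • (q - cpt d)) (cpt d)
          = ip (cpt d) (cpt d) - (ri/m) * (ip q (cpt d) - ip (cpt d) (cpt d)) := by
        simp only [ip, inner_sub_left, real_inner_smul_left, inner_sub_left]
      rw [h6, hq, (cpt_mem_Hs hd0 : ip (cpt d) (cpt d) = _)]
      ring
    have hsub : cpt d - (ri/m) • (q - cpt d) - cpt d = (-(ri/m)) • (q - cpt d) := by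
      module
    have hiq : ip q (cpt d - (ri/m) • (q - cpt d)) = 1/(d:ℝ)^2 - ri * m := by
      rw [ip_center hd0 hq hvH, hsub]
      have h2 : ip (q - cpt d) ((-(ri/m)) • (q - cpt d))
          = -(ri/m) * ip (q - cpt d) (q - cpt d) := by
        simp only [ip, real_inner_smul_right]
      rw [h2, ← norm_sq_eq, ← hm]
      field_simp
      ring
    rw [hiq]
    have hrm : 1/((d:ℝ)^2*((d:ℝ)+1)) < ri * m := by
      have hpos : (0:ℝ) < (d:ℝ)^2*((d:ℝ)^2-1) := mul_pos (by nlinarith) (by nlinarith)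
      have h1 : (1/((d:ℝ)^2*((d:ℝ)+1)))^2 < ri^2 * m^2 := by
        rw [hri2]
        have hb : (1/((d:ℝ)^2*((d:ℝ)+1)))^2
            = 1/((d:ℝ)^2*((d:ℝ)^2-1)) * (((d:ℝ)-1)/((d:ℝ)^2*((d:ℝ)+1))) := by
          have hne2 : ((d:ℝ)^2 - 1) ≠ 0 := by nlinarith
          have hne3 : ((d:ℝ)+1) ≠ 0 := by nlinarith
          field_simp
          ring
        rw [hb]
        exact mul_lt_mul_of_pos_left hro (one_div_pos.2 hpos)
      nlinarith [mul_pos hri0 hm0, (show (0:ℝ) < 1/((d:ℝ)^2*((d:ℝ)+1)) by positivity), h1]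
    have harr : 1/((d:ℝ)*((d:ℝ)+1)) = 1/(d:ℝ)^2 - 1/((d:ℝ)^2*((d:ℝ)+1)) := by
      field_simp
      ring
    linarith

lemma germ_union {d : ℕ} (hd : 2 ≤ d) {A B : Set (V d)} (hG : IsGerm d A)
    (hAo : A ⊆ outBall d)
    (hBsub : B ⊆ probSimplex d) (hBo : ∀ b ∈ B, ip b b ≤ 2/((d:ℝ)*((d:ℝ)+1)))
    (hlow : ∀ b ∈ B, ∀ x ∈ A ∪ B, 1/((d:ℝ)*((d:ℝ)+1)) ≤ ip b x) :
    IsGerm d (A ∪ B) := by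
  have hout : ∀ x ∈ A ∪ B, ip x x ≤ 2/((d:ℝ)*((d:ℝ)+1)) := by
    rintro x (hx | hx)
    · exact (hAo hx).2
    · exact hBo x hx
  constructor
  · rintro x (hx | hx)
    · exact hG.1 hx
    · exact hBsub hx
  · intro p hp s hs
    refine ⟨?_, outBall_ip_le hd (hout p hp) (hout s hs)⟩
    rcases hp with hp | hp
    · rcases hs with hs | hs
      · exact (hG.2 p hp s hs).1
      · rw [ip_comm]
        exact hlow s hs p (Set.mem_union_left _ hp)
    · exact hlow p hp s hs

/-- for A ⊆ Δ ∩ B_o, A is a germ iff A ⊆ A*, and A is a maximal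
germ iff A = A*; hence maximal germs are exactly the qplexes. -/
theorem statement5 (d : ℕ) (hd : 2 ≤ d) (A : Set (V d))
    (hA : A ⊆ probSimplex d ∩ outBall d) :
    (IsGerm d A ↔ A ⊆ polar d A) ∧
    (IsMaximalGerm d A ↔ A = polar d A) ∧
    (IsMaximalGerm d A ↔ IsQplex d A) := by
  have hD : (2:ℝ) ≤ (d:ℝ) := by exact_mod_cast hd
  have hd0 : (d:ℝ) ≠ 0 := by linarith
  have hdd : (0:ℝ) < (d:ℝ)*((d:ℝ)+1) := by nlinarith
  have part1 : IsGerm d A ↔ A ⊆ polar d A := by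
    constructor
    · rintro ⟨hsub, hbnd⟩ p hp
      exact ⟨(hsub hp).1, fun v hv => (hbnd p hp v hv).1⟩
    · intro h
      refine ⟨fun p hp => (hA hp).1, fun p hp s hs => ⟨(h hp).2 s hs, ?_⟩⟩
      exact outBall_ip_le hd (hA hp).2.2 (hA hs).2.2
  have part2a : A = polar d A → IsMaximalGerm d A := by
    intro hEq
    have hG : IsGerm d A := part1.2 (le_of_eq hEq)
    refine ⟨hG, fun G' hG' hsub => ?_⟩
    refine Set.Subset.antisymm (fun g hg => ?_) hsub
    have : g ∈ polar d A := ⟨(hG'.1 hg).1, fun v hv => (hG'.2 g hg v (hsub hv)).1⟩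
    rw [← hEq] at this
    exact this
  have part2b : IsMaximalGerm d A → A = polar d A := by
    rintro ⟨hG, hmax⟩
    have hAo : A ⊆ outBall d := fun p hp => ⟨(hG.1 hp).1, (hG.2 p hp p hp).2⟩
    -- the basis distributions all belong to A
    have hbasis : ∀ k, basisDist d k ∈ A := by
      intro k
      have hGb : IsGerm d (A ∪ Set.range (basisDist d)) := by
        refine germ_union hd hG hAo ?_ ?_ ?_
        · rintro _ ⟨k, rfl⟩; exact basisDist_mem hd k
        · rintro _ ⟨k, rfl⟩; exact le_of_eq (basisDist_ip_self hd k)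
        · rintro _ ⟨k, rfl⟩ x hx
          rcases hx with hx | hx
          · exact basisDist_ip_ge hd k (hG.1 hx)
          · exact basisDist_ip_ge hd k (by rcases hx with ⟨l, rfl⟩; exact basisDist_mem hd l)
      have := hmax _ hGb Set.subset_union_left
      rw [← this]
      exact Set.mem_union_right _ ⟨k, rfl⟩
    -- the in-ball belongs to A
    have hin : inBall d ⊆ A := by
      have hGi : IsGerm d (A ∪ inBall d) := by
        refine germ_union hd hG hAo (inBall_subset_prob hd) ?_ ?_
        · intro b hb; exact (inBall_subset_out hd hb).2
        · rintro b hb x hx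
          rcases hx with hx | hx
          · exact inBall_ip_ge hd hb (hG.1 hx).1 (hAo hx).2
          · exact inBall_ip_ge hd hb (inBall_subset_out hd hx).1 (inBall_subset_out hd hx).2
      have := hmax _ hGi Set.subset_union_left
      rw [← this]
      intro x hx
      exact Set.mem_union_right _ hx
    refine Set.Subset.antisymm (part1.1 hG) ?_
    intro q hq
    have hqH : q ∈ Hs d := hq.1
    have hqΔ : ∀ i, 0 ≤ q i := by
      intro k
      have h1 := hq.2 (basisDist d k) (hbasis k)
      rw [ip_comm, basisDist_ip hd k hqH] at h1
      rw [div_le_div_iff₀ hdd (by linarith : (0:ℝ) < (d:ℝ)+1)] at h1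
      have hinv : (1/(d:ℝ)) * ((d:ℝ)*((d:ℝ)+1)) = (d:ℝ)+1 := by
        field_simp
      nlinarith [h1, hinv, hdd]
    have hqO : ip q q ≤ 2/((d:ℝ)*((d:ℝ)+1)) := by
      by_contra h
      push_neg at h
      obtain ⟨v, hv, hlt⟩ := escape hd hqH h
      exact absurd (hq.2 v (hin hv)) (not_le.2 hlt)
    have hGq : IsGerm d (A ∪ {q}) := by
      refine germ_union hd hG hAo ?_ ?_ ?_
      · rintro x rfl
        exact ⟨hqH, hqΔ⟩
      · rintro x rfl
        exact hqO
      · rintro b rfl x hx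
        rcases hx with hx | hx
        · exact hq.2 x hx
        · rcases hx with rfl
          have h1 := hs_ip_self_ge hd0 hqH
          have h2 : 1/((d:ℝ)*((d:ℝ)+1)) ≤ 1/(d:ℝ)^2 := by
            rw [div_le_div_iff₀ hdd (by positivity)]
            nlinarith
          linarith
    have := hmax _ hGq Set.subset_union_left
    rw [← this]
    exact Set.mem_union_right _ rfl
  have part2 : IsMaximalGerm d A ↔ A = polar d A := ⟨part2b, part2a⟩
  refine ⟨part1, part2, ?_⟩
  constructor
  · intro h
    exact ⟨hA, part2b h⟩
  · rintro ⟨_, hEq⟩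
    exact part2a hEq
end
end

section
/- Let G be a germ. Then the stem and envelope of G are given by 𝒮(G) = cc(Δ_e ∪ B_i ∪ G) and ℰ(G) = Δ ∩ B_o ∩ G*. In particular, 𝒮(G) and ℰ(G) are mutually polar, and taking G = ∅ the principal stem and envelope are 𝒮 = cc(Δ_e ∪ B_i) and ℰ = Δ ∩ B_o. -/
noncomputable section

/-- The stem of a germ G: the intersection of all qplexes containing G. -/
def stem (d : ℕ) (G : Set (V d)) : Set (V d) :=
  ⋂ Q ∈ {Q : Set (V d) | IsQplex d Q ∧ G ⊆ Q}, Q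

/-- The envelope of a germ G: the union of all qplexes containing G. -/
def envl (d : ℕ) (G : Set (V d)) : Set (V d) :=
  ⋃ Q ∈ {Q : Set (V d) | IsQplex d Q ∧ G ⊆ Q}, Q


open RealInnerProductSpace Set

namespace QP
set_option linter.unusedSectionVars false

variable {d : ℕ}

def LL (d : ℕ) : ℝ := 1/((d:ℝ)*((d:ℝ)+1))
def UU (d : ℕ) : ℝ := 2/((d:ℝ)*((d:ℝ)+1))
def mm (d : ℕ) : ℝ := 1/((d:ℝ)^2*((d:ℝ)+1))
def ri2 (d : ℕ) : ℝ := 1/((d:ℝ)^2*((d:ℝ)^2-1))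
def ro2 (d : ℕ) : ℝ := ((d:ℝ)-1)/((d:ℝ)^2*((d:ℝ)+1))
def riv (d : ℕ) : ℝ := Real.sqrt (ri2 d)
def rov (d : ℕ) : ℝ := Real.sqrt (ro2 d)

lemma ip_eq_sum (u v : V d) : ip u v = ∑ i, u i * v i := by
  simp [ip, PiLp.inner_apply, RCLike.inner_apply, mul_comm]

lemma ip_comm (u v : V d) : ip u v = ip v u := real_inner_comm v u

lemma ip_cpt (u : V d) : ip u (cpt d) = (∑ i, u i) / (d:ℝ)^2 := by
  rw [ip_eq_sum]
  simp only [cpt]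
  rw [Finset.sum_div]
  exact Finset.sum_congr rfl (fun i _ => mul_one_div _ _)

lemma inner_cpt_right {u : V d} (hu : u ∈ Hs d) : ⟪u, cpt d⟫ = 1/(d:ℝ)^2 := hu
lemma inner_cpt_left {u : V d} (hu : u ∈ Hs d) : ⟪cpt d, u⟫ = 1/(d:ℝ)^2 := by
  rw [real_inner_comm]; exact hu

variable (hd : 2 ≤ d)
include hd

lemma dR : (2:ℝ) ≤ (d:ℝ) := by exact_mod_cast hd
lemma dR0 : (0:ℝ) < (d:ℝ) := lt_of_lt_of_le (by norm_num) (dR hd)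

lemma sq4 : (4:ℝ) ≤ (d:ℝ)^2 := by have := dR hd; nlinarith
lemma ri2_pos : 0 < ri2 d := by
  have h2 := sq4 hd; have h3 : (0:ℝ) < (d:ℝ)^2 := by positivity
  unfold ri2; exact div_pos one_pos (mul_pos h3 (by linarith))
lemma ro2_pos : 0 < ro2 d := by
  have h2 := dR hd; have h3 : (0:ℝ) < (d:ℝ)^2 := by positivity
  unfold ro2; exact div_pos (by linarith) (mul_pos h3 (by linarith))
lemma mm_pos : 0 < mm d := by
  have h2 := dR hd; have h3 : (0:ℝ) < (d:ℝ)^2 := by positivity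
  unfold mm; exact div_pos one_pos (mul_pos h3 (by linarith))
lemma riv_pos : 0 < riv d := Real.sqrt_pos.mpr (ri2_pos hd)
lemma rov_pos : 0 < rov d := Real.sqrt_pos.mpr (ro2_pos hd)
lemma riv_sq : (riv d)^2 = ri2 d := Real.sq_sqrt (le_of_lt (ri2_pos hd))
lemma rov_sq : (rov d)^2 = ro2 d := Real.sq_sqrt (le_of_lt (ro2_pos hd))

lemma riv_mul_rov : riv d * rov d = mm d := by
  have hD := dR hd
  have h1 : ri2 d * ro2 d = (mm d)^2 := by
    unfold ri2 ro2 mm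
    have h4 := sq4 hd
    have h5 : (0:ℝ) < (d:ℝ)^2 := by positivity
    have h2 : (d:ℝ)^2*((d:ℝ)^2-1) ≠ 0 := ne_of_gt (mul_pos h5 (by linarith))
    have h3 : (d:ℝ)^2*((d:ℝ)+1) ≠ 0 := ne_of_gt (mul_pos h5 (by linarith))
    have h6 : (d:ℝ)^2 - 1 ≠ 0 := ne_of_gt (by linarith)
    field_simp
    ring
  have h4 : riv d * rov d = Real.sqrt (ri2 d * ro2 d) :=
    (Real.sqrt_mul (le_of_lt (ri2_pos hd)) _).symm
  rw [h4, h1, Real.sqrt_sq (le_of_lt (mm_pos hd))]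

lemma LL_eq : LL d = 1/(d:ℝ)^2 - mm d := by
  have := dR0 hd; unfold LL mm; field_simp; ring
lemma UU_eq : UU d = 1/(d:ℝ)^2 + ro2 d := by
  have := dR0 hd; unfold UU ro2; field_simp; ring
lemma mm_le_ro2 : mm d ≤ ro2 d := by
  have h := dR hd; have h4 := sq4 hd
  have h5 : (0:ℝ) < (d:ℝ)^2 := by positivity
  have h6 : (0:ℝ) < (d:ℝ)^2*((d:ℝ)+1) := mul_pos h5 (by linarith)
  unfold mm ro2
  rw [div_le_div_iff₀ h6 h6]; nlinarith
lemma ri2_le_mm : ri2 d ≤ mm d := by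
  have h := dR hd; have h4 := sq4 hd
  have h5 : (0:ℝ) < (d:ℝ)^2 := by positivity
  unfold ri2 mm
  rw [div_le_div_iff₀ (mul_pos h5 (by linarith)) (mul_pos h5 (by linarith))]
  have h7 : (d:ℝ)+1 ≤ (d:ℝ)^2-1 := by nlinarith [mul_self_nonneg ((d:ℝ)-2)]
  nlinarith [mul_le_mul_of_nonneg_left h7 (le_of_lt h5)]
lemma ri2_le_ro2 : ri2 d ≤ ro2 d := (ri2_le_mm hd).trans (mm_le_ro2 hd)
lemma LL_le_inv_sq : LL d ≤ 1/(d:ℝ)^2 := by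
  rw [LL_eq hd]; linarith [mm_pos hd]


lemma cpt_inner_self : ip (cpt d) (cpt d) = 1/(d:ℝ)^2 := by
  have h0 := dR0 hd
  rw [ip_cpt]
  have h1 : ∑ i : Fin (d^2), cpt d i = ((d:ℝ)^2) * (1/(d:ℝ)^2) := by
    simp [cpt, Finset.sum_const, Finset.card_univ]
  rw [h1]
  field_simp

lemma cpt_mem_Hs : cpt d ∈ Hs d := by
  show ip (cpt d) (cpt d) = _
  rw [cpt_inner_self hd]

lemma sum_eq_one {u : V d} (hu : u ∈ Hs d) : ∑ i, u i = 1 := by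
  have h0 := dR0 hd
  have h : (∑ i, u i) / (d:ℝ)^2 = 1/(d:ℝ)^2 := by rw [← ip_cpt]; exact hu
  field_simp at h; exact h


lemma ip_shift {u v : V d} (hu : u ∈ Hs d) (hv : v ∈ Hs d) :
    ip u v = ⟪u - cpt d, v - cpt d⟫ + 1/(d:ℝ)^2 := by
  have h1 : ⟪u - cpt d, v - cpt d⟫
      = ⟪u,v⟫ - ⟪u, cpt d⟫ - ⟪cpt d, v⟫ + ⟪cpt d, cpt d⟫ := by
    rw [inner_sub_left, inner_sub_right, inner_sub_right]; ring
  rw [h1, inner_cpt_right hu, inner_cpt_left hv, show ⟪cpt d, cpt d⟫ = ip (cpt d) (cpt d) from rfl,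
    cpt_inner_self hd]
  show ip u v = ip u v - _ - _ + _ + _
  ring

lemma ip_self_eq {u : V d} (hu : u ∈ Hs d) :
    ip u u = ‖u - cpt d‖^2 + 1/(d:ℝ)^2 := by
  rw [ip_shift hd hu hu, real_inner_self_eq_norm_sq]

lemma ip_upper {u v : V d} (hu : u ∈ Hs d) (hv : v ∈ Hs d) {a b : ℝ}
    (h1 : ‖u - cpt d‖ ≤ a) (h2 : ‖v - cpt d‖ ≤ b) (hb : 0 ≤ b) :
    ip u v ≤ 1/(d:ℝ)^2 + a * b := by
  rw [ip_shift hd hu hv]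
  have := real_inner_le_norm (u - cpt d) (v - cpt d)
  have h3 : ‖u - cpt d‖ * ‖v - cpt d‖ ≤ a * b :=
    mul_le_mul h1 h2 (norm_nonneg _) ((norm_nonneg _).trans h1)
  linarith

lemma ip_lower {u v : V d} (hu : u ∈ Hs d) (hv : v ∈ Hs d) {a b : ℝ}
    (h1 : ‖u - cpt d‖ ≤ a) (h2 : ‖v - cpt d‖ ≤ b) (hb : 0 ≤ b) :
    1/(d:ℝ)^2 - a * b ≤ ip u v := by
  rw [ip_shift hd hu hv]
  have h4 := abs_real_inner_le_norm (u - cpt d) (v - cpt d)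
  have h5 := neg_abs_le ⟪u - cpt d, v - cpt d⟫
  have h3 : ‖u - cpt d‖ * ‖v - cpt d‖ ≤ a * b :=
    mul_le_mul h1 h2 (norm_nonneg _) ((norm_nonneg _).trans h1)
  linarith

/-! ### basis distributions -/

lemma ip_basis_general (u : V d) (k : Fin (d^2)) :
    ip u (basisDist d k) = (u k + (∑ i, u i)/(d:ℝ))/((d:ℝ)+1) := by
  have h0 := dR0 hd
  have h1 : (d:ℝ)+1 ≠ 0 := by linarith
  have h2 : (d:ℝ) ≠ 0 := ne_of_gt h0
  rw [ip_eq_sum]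
  have h3 : ∀ i ∈ Finset.univ, u i * basisDist d k i
      = (if k = i then u i else 0)/((d:ℝ)+1) + u i/((d:ℝ)*((d:ℝ)+1)) := by
    intro i _
    simp only [basisDist]
    by_cases h : k = i
    · simp [h]; field_simp
    · simp [h]; field_simp
  rw [Finset.sum_congr rfl h3, Finset.sum_add_distrib]
  rw [← Finset.sum_div, ← Finset.sum_div, Finset.sum_ite_eq Finset.univ k u]
  simp only [Finset.mem_univ, if_pos]
  field_simp

lemma ip_basis {u : V d} (hu : u ∈ Hs d) (k : Fin (d^2)) :
    ip u (basisDist d k) = (u k + 1/(d:ℝ))/((d:ℝ)+1) := by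
  rw [ip_basis_general hd, sum_eq_one hd hu]

lemma basis_mem_Hs (k : Fin (d^2)) : basisDist d k ∈ Hs d := by
  have h0 := dR0 hd
  have h1 : (d:ℝ)+1 ≠ 0 := by linarith
  show ip _ (cpt d) = _
  rw [ip_comm, ip_basis_general hd (cpt d) k]
  have h2 : ∑ i : Fin (d^2), cpt d i = 1 := by
    simp [cpt, Finset.sum_const, Finset.card_univ]
    field_simp
  rw [h2]
  simp only [cpt]
  field_simp
  ring

lemma basis_mem_prob (k : Fin (d^2)) : basisDist d k ∈ probSimplex d := by
  refine ⟨basis_mem_Hs hd k, fun i => ?_⟩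
  have h0 := dR0 hd
  show 0 ≤ ((if k = i then (1:ℝ) else 0) + 1/(d:ℝ)) / ((d:ℝ)+1)
  have : (0:ℝ) ≤ (if k = i then (1:ℝ) else 0) := by positivity
  have h1 : (0:ℝ) ≤ 1/(d:ℝ) := by positivity
  apply div_nonneg (by linarith) (by linarith)

lemma basis_self (k : Fin (d^2)) : ip (basisDist d k) (basisDist d k) = UU d := by
  have h0 := dR0 hd
  have h1 : (d:ℝ)+1 ≠ 0 := by linarith
  rw [ip_basis hd (basis_mem_Hs hd k)]
  show ((((if k = k then (1:ℝ) else 0) + 1/(d:ℝ)) / ((d:ℝ)+1)) + 1/(d:ℝ))/((d:ℝ)+1) = _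
  rw [if_pos rfl]
  unfold UU
  field_simp
  ring

/-! ### balls and norms -/

lemma norm_le_rov_of_ip {u : V d} (hu : u ∈ Hs d) (h : ip u u ≤ UU d) :
    ‖u - cpt d‖ ≤ rov d := by
  have h1 := ip_self_eq hd hu
  have h2 : ‖u - cpt d‖^2 ≤ ro2 d := by rw [UU_eq hd] at h; linarith
  calc ‖u - cpt d‖ = Real.sqrt (‖u - cpt d‖^2) := (Real.sqrt_sq (norm_nonneg _)).symm
    _ ≤ rov d := Real.sqrt_le_sqrt h2

lemma outBall_norm {u : V d} (h : u ∈ outBall d) : ‖u - cpt d‖ ≤ rov d :=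
  norm_le_rov_of_ip hd h.1 h.2

lemma mem_outBall_of_norm {u : V d} (hu : u ∈ Hs d) (h : ‖u - cpt d‖ ≤ rov d) :
    u ∈ outBall d := by
  refine ⟨hu, ?_⟩
  have h1 := ip_self_eq hd hu
  have h2 : ‖u - cpt d‖^2 ≤ ro2 d := by
    rw [← rov_sq hd]; exact pow_le_pow_left₀ (norm_nonneg _) h 2
  show ip u u ≤ UU d
  rw [UU_eq hd]; linarith

lemma inBall_norm {u : V d} (h : u ∈ inBall d) : ‖u - cpt d‖ ≤ riv d := by
  have h2 : ‖u - cpt d‖^2 ≤ ri2 d := h.2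
  calc ‖u - cpt d‖ = Real.sqrt (‖u - cpt d‖^2) := (Real.sqrt_sq (norm_nonneg _)).symm
    _ ≤ riv d := Real.sqrt_le_sqrt h2

lemma basis_norm (k : Fin (d^2)) : ‖basisDist d k - cpt d‖ ≤ rov d :=
  norm_le_rov_of_ip hd (basis_mem_Hs hd k) (le_of_eq (basis_self hd k))

lemma germ_norm {G : Set (V d)} (hG : IsGerm d G) {p : V d} (hp : p ∈ G) :
    ‖p - cpt d‖ ≤ rov d :=
  norm_le_rov_of_ip hd ((hG.1 hp).1) ((hG.2 p hp p hp).2)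

lemma cpt_mem_inBall : cpt d ∈ inBall d := by
  refine ⟨cpt_mem_Hs hd, ?_⟩
  have h := le_of_lt (ri2_pos hd)
  unfold ri2 at h
  simpa using h

/-! ### coordinates via inner products -/

omit hd in
lemma inner_single (u : V d) (i : Fin (d^2)) :
    ⟪u, EuclideanSpace.single i (1:ℝ)⟫ = u i := by
  rw [EuclideanSpace.inner_single_right]
  simp

lemma coord_sub {u : V d} (hu : u ∈ Hs d) (i : Fin (d^2)) :
    ⟪u - cpt d, EuclideanSpace.single i (1:ℝ) - cpt d⟫ = u i - 1/(d:ℝ)^2 := by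
  rw [inner_sub_left, inner_sub_right, inner_sub_right]
  rw [inner_single, inner_cpt_right hu, inner_single]
  have hc : (cpt d) i = 1/(d:ℝ)^2 := rfl
  rw [hc, inner_cpt_right (cpt_mem_Hs hd)]
  ring

lemma norm_single_sub (i : Fin (d^2)) :
    ‖EuclideanSpace.single i (1:ℝ) - cpt d‖^2 = 1 - 1/(d:ℝ)^2 := by
  have hs : ⟪EuclideanSpace.single i (1:ℝ), EuclideanSpace.single i (1:ℝ)⟫ = (1:ℝ) := by
    rw [EuclideanSpace.inner_single_right]; simp
  have h1 : ⟪cpt d, EuclideanSpace.single i (1:ℝ)⟫ = 1/(d:ℝ)^2 := by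
    rw [EuclideanSpace.inner_single_right]; simp [cpt]
  have h2 : ⟪EuclideanSpace.single i (1:ℝ), cpt d⟫ = 1/(d:ℝ)^2 := by
    rw [real_inner_comm]; exact h1
  rw [← real_inner_self_eq_norm_sq, inner_sub_left, inner_sub_right, inner_sub_right,
    hs, h1, h2, inner_cpt_right (cpt_mem_Hs hd)]
  ring

lemma inBall_subset_prob : inBall d ⊆ probSimplex d := by
  intro u hu
  refine ⟨hu.1, fun i => ?_⟩
  have h0 := dR0 hd
  have hcs := abs_real_inner_le_norm (u - cpt d) (EuclideanSpace.single i (1:ℝ) - cpt d)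
  rw [coord_sub hd hu.1] at hcs
  have hnorm : ‖EuclideanSpace.single i (1:ℝ) - cpt d‖ = Real.sqrt (1 - 1/(d:ℝ)^2) := by
    rw [← norm_single_sub hd i, Real.sqrt_sq (norm_nonneg _)]
  have hub : ‖u - cpt d‖ * ‖EuclideanSpace.single i (1:ℝ) - cpt d‖
      ≤ riv d * Real.sqrt (1 - 1/(d:ℝ)^2) := by
    rw [hnorm]
    exact mul_le_mul_of_nonneg_right (inBall_norm hd hu) (Real.sqrt_nonneg _)
  have hkey : riv d * Real.sqrt (1 - 1/(d:ℝ)^2) = 1/(d:ℝ)^2 := by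
    rw [riv, ← Real.sqrt_mul (le_of_lt (ri2_pos hd))]
    have : ri2 d * (1 - 1/(d:ℝ)^2) = (1/(d:ℝ)^2)^2 := by
      have h4 := sq4 hd
      have h5 : (d:ℝ)^2 ≠ 0 := by positivity
      have h6 : (d:ℝ)^2 - 1 ≠ 0 := by intro h; nlinarith
      unfold ri2
      field_simp
    rw [this, Real.sqrt_sq (by positivity)]
  have := abs_le.mp hcs
  nlinarith [this.1, hub, hkey]

/-! ### polar: closed, convex, antitone -/

omit hd in
lemma Hs_closed : IsClosed (Hs d) :=
  isClosed_eq (Continuous.inner continuous_id continuous_const) continuous_const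

omit hd in
lemma Hs_convex : Convex ℝ (Hs d) := by
  intro x hx y hy a b ha hb hab
  show ⟪a•x + b•y, cpt d⟫ = 1/(d:ℝ)^2
  rw [inner_add_left, real_inner_smul_left, real_inner_smul_left,
    inner_cpt_right hx, inner_cpt_right hy, ← add_mul, hab, one_mul]

omit hd in
lemma halfspace_closed (u : V d) (r : ℝ) : IsClosed {v : V d | r ≤ ⟪u, v⟫} :=
  isClosed_le continuous_const (Continuous.inner continuous_const continuous_id)

omit hd in
lemma halfspace_convex (u : V d) (r : ℝ) : Convex ℝ {v : V d | r ≤ ⟪u, v⟫} := by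
  intro x hx y hy a b ha hb hab
  show r ≤ ⟪u, a•x + b•y⟫
  rw [inner_add_right, real_inner_smul_right, real_inner_smul_right]
  have h1 : a * r ≤ a * ⟪u, x⟫ := mul_le_mul_of_nonneg_left hx ha
  have h2 : b * r ≤ b * ⟪u, y⟫ := mul_le_mul_of_nonneg_left hy hb
  have : a * r + b * r = r := by rw [← add_mul, hab, one_mul]
  linarith

omit hd in
lemma polar_eq (A : Set (V d)) :
    polar d A = Hs d ∩ ⋂ v ∈ A, {u : V d | LL d ≤ ⟪v, u⟫} := by
  ext u
  simp only [polar, Set.mem_setOf_eq, Set.mem_inter_iff, Set.mem_iInter]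
  constructor
  · rintro ⟨h1, h2⟩
    exact ⟨h1, fun v hv => by rw [real_inner_comm]; exact h2 v hv⟩
  · rintro ⟨h1, h2⟩
    exact ⟨h1, fun v hv => by have := h2 v hv; rw [real_inner_comm] at this; exact this⟩

omit hd in
lemma polar_closed (A : Set (V d)) : IsClosed (polar d A) := by
  rw [polar_eq]
  exact Hs_closed.inter (isClosed_biInter fun v _ => halfspace_closed v (LL d))

omit hd in
lemma polar_convex (A : Set (V d)) : Convex ℝ (polar d A) := by
  rw [polar_eq]
  exact Hs_convex.inter (convex_iInter fun v => convex_iInter fun _ => halfspace_convex v (LL d))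

omit hd in
lemma polar_subset_Hs (A : Set (V d)) : polar d A ⊆ Hs d := fun _ h => h.1

omit hd in
lemma polar_anti {A B : Set (V d)} (h : A ⊆ B) : polar d B ⊆ polar d A :=
  fun u hu => ⟨hu.1, fun v hv => hu.2 v (h hv)⟩

/-! ### key bounds -/

lemma ip_le_UU {u v : V d} (hu : u ∈ Hs d) (hv : v ∈ Hs d)
    (h1 : ‖u - cpt d‖ ≤ rov d) (h2 : ‖v - cpt d‖ ≤ rov d) : ip u v ≤ UU d := by
  have h3 := ip_upper hd hu hv h1 h2 (rov_pos hd).le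
  have h4 : rov d * rov d = ro2 d := by rw [← rov_sq hd]; ring
  rw [UU_eq hd]; linarith

lemma lower_inBall {z v : V d} (hz : z ∈ inBall d) (hv : v ∈ Hs d)
    (h2 : ‖v - cpt d‖ ≤ rov d) : LL d ≤ ip z v := by
  have h3 := ip_lower hd hz.1 hv (inBall_norm hd hz) h2 (rov_pos hd).le
  have h4 := riv_mul_rov hd
  rw [LL_eq hd]; linarith

lemma aux_div : 1/((d:ℝ)*((d:ℝ)+1)) * ((d:ℝ)+1) = 1/(d:ℝ) := by
  have h0 := dR0 hd
  field_simp

lemma lower_basis {v : V d} (hv : v ∈ probSimplex d) (k : Fin (d^2)) :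
    LL d ≤ ip (basisDist d k) v := by
  have h0 := dR0 hd
  have hvk := hv.2 k
  rw [ip_comm, ip_basis hd hv.1 k]
  unfold LL
  rw [le_div_iff₀ (by linarith : (0:ℝ) < (d:ℝ)+1), aux_div hd]
  linarith

lemma ip_self_ge_LL {u : V d} (hu : u ∈ Hs d) : LL d ≤ ip u u := by
  rw [ip_self_eq hd hu, LL_eq hd]
  have := mm_pos hd
  nlinarith [sq_nonneg ‖u - cpt d‖]

lemma key_pos {u : V d} (hu : u ∈ Hs d) (h : ∀ k, LL d ≤ ip u (basisDist d k)) :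
    ∀ i, 0 ≤ u i := by
  intro i
  have h0 := dR0 hd
  have hi := h i
  rw [ip_basis hd hu] at hi
  unfold LL at hi
  rw [le_div_iff₀ (by linarith : (0:ℝ) < (d:ℝ)+1), aux_div hd] at hi
  linarith

lemma key_ball {u : V d} (hu : u ∈ Hs d) (h : ∀ z ∈ inBall d, LL d ≤ ip u z) :
    ‖u - cpt d‖ ≤ rov d := by
  rcases eq_or_ne u (cpt d) with h' | h'
  · rw [h', sub_self, norm_zero]; exact (rov_pos hd).le
  · have hn : 0 < ‖u - cpt d‖ := norm_pos_iff.mpr (sub_ne_zero.mpr h')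
    set t : ℝ := riv d / ‖u - cpt d‖ with ht
    have htpos : 0 < t := div_pos (riv_pos hd) hn
    set z : V d := cpt d - t • (u - cpt d) with hzdef
    have hzH : z ∈ Hs d := by
      show ⟪z, cpt d⟫ = 1/(d:ℝ)^2
      rw [hzdef, inner_sub_left, real_inner_smul_left, inner_sub_left,
        inner_cpt_right hu, inner_cpt_right (cpt_mem_Hs hd)]
      ring
    have hzc : z - cpt d = (-t) • (u - cpt d) := by
      rw [hzdef, neg_smul]; abel
    have hz_norm : ‖z - cpt d‖ = riv d := by
      rw [hzc, norm_smul, norm_neg, Real.norm_eq_abs, abs_of_pos htpos, ht,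
        div_mul_cancel₀ _ (ne_of_gt hn)]
    have hzB : z ∈ inBall d := by
      refine ⟨hzH, ?_⟩
      show ‖z - cpt d‖^2 ≤ 1/((d:ℝ)^2*((d:ℝ)^2-1))
      rw [hz_norm, riv_sq hd]; exact le_refl _
    have hlow := h z hzB
    rw [ip_shift hd hu hzH, hzc, real_inner_smul_right, real_inner_self_eq_norm_sq,
      LL_eq hd] at hlow
    have e : t * ‖u - cpt d‖^2 = riv d * ‖u - cpt d‖ := by
      rw [ht]; field_simp
    have h5 : riv d * ‖u - cpt d‖ ≤ mm d := by nlinarith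
    rw [← riv_mul_rov hd] at h5
    exact le_of_mul_le_mul_left h5 (riv_pos hd)

/-! ### germs and qplex extension -/

lemma riv_le_rov : riv d ≤ rov d := Real.sqrt_le_sqrt (ri2_le_ro2 hd)

lemma bigGerm {G : Set (V d)} (hG : IsGerm d G) :
    IsGerm d (Set.range (basisDist d) ∪ inBall d ∪ G) := by
  have hmem : ∀ x ∈ Set.range (basisDist d) ∪ inBall d ∪ G,
      x ∈ probSimplex d ∧ ‖x - cpt d‖ ≤ rov d := by
    rintro x ((⟨k, rfl⟩ | hx) | hx)
    · exact ⟨basis_mem_prob hd k, basis_norm hd k⟩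
    · exact ⟨inBall_subset_prob hd hx, (inBall_norm hd hx).trans (riv_le_rov hd)⟩
    · exact ⟨hG.1 hx, germ_norm hd hG hx⟩
  constructor
  · exact fun x hx => (hmem x hx).1
  · intro p hp s hs
    have hpm := hmem p hp
    have hsm := hmem s hs
    refine ⟨?_, ip_le_UU hd hpm.1.1 hsm.1.1 hpm.2 hsm.2⟩
    rcases hp with (⟨k, rfl⟩ | hp) | hp
    · exact lower_basis hd hsm.1 k
    · exact lower_inBall hd hp hsm.1.1 hsm.2
    · rcases hs with (⟨k, rfl⟩ | hs) | hs
      · rw [ip_comm]; exact lower_basis hd hpm.1 k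
      · rw [ip_comm]; exact lower_inBall hd hs hpm.1.1 hpm.2
      · exact (hG.2 p hp s hs).1

lemma insert_germ {G : Set (V d)} (hG : IsGerm d G) {x : V d}
    (hx : x ∈ probSimplex d) (hxo : x ∈ outBall d) (hxp : x ∈ polar d G) :
    IsGerm d (insert x G) := by
  constructor
  · rintro y (rfl | hy)
    · exact hx
    · exact hG.1 hy
  · intro p hp s hs
    have normmem : ∀ y ∈ insert x G, y ∈ Hs d ∧ ‖y - cpt d‖ ≤ rov d := by
      rintro y (rfl | hy)
      · exact ⟨hx.1, outBall_norm hd hxo⟩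
      · exact ⟨(hG.1 hy).1, germ_norm hd hG hy⟩
    have hpm := normmem p hp
    have hsm := normmem s hs
    refine ⟨?_, ip_le_UU hd hpm.1 hsm.1 hpm.2 hsm.2⟩
    rcases hp with rfl | hp
    · rcases hs with rfl | hs
      · exact ip_self_ge_LL hd hpm.1
      · exact hxp.2 s hs
    · rcases hs with rfl | hs
      · rw [ip_comm]; exact hxp.2 p hp
      · exact (hG.2 p hp s hs).1

lemma exists_qplex {G : Set (V d)} (hG : IsGerm d G) :
    ∃ Q, IsQplex d Q ∧ G ⊆ Q := by
  have hchainub : ∀ c ⊆ {G' | IsGerm d G' ∧ G ⊆ G'}, IsChain (· ⊆ ·) c → c.Nonempty →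
      ∃ ub ∈ {G' | IsGerm d G' ∧ G ⊆ G'}, ∀ s ∈ c, s ⊆ ub := by
    intro c hcS hchain hcne
    refine ⟨⋃₀ c, ⟨⟨?_, ?_⟩, ?_⟩, fun s hs => subset_sUnion_of_mem hs⟩
    · rintro x ⟨A, hA, hxA⟩
      exact (hcS hA).1.1 hxA
    · rintro p ⟨A, hA, hpA⟩ s ⟨B, hB, hsB⟩
      rcases hchain.total hA hB with h | h
      · exact (hcS hB).1.2 p (h hpA) s hsB
      · exact (hcS hA).1.2 p hpA s (h hsB)
    · obtain ⟨A, hA⟩ := hcne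
      exact (hcS hA).2.trans (subset_sUnion_of_mem hA)
  obtain ⟨M, _, hM⟩ := zorn_subset_nonempty {G' | IsGerm d G' ∧ G ⊆ G'} hchainub G ⟨hG, subset_rfl⟩
  have hMg : IsGerm d M := hM.prop.1
  have hGsub : G ⊆ M := hM.prop.2
  have hbig : Set.range (basisDist d) ∪ inBall d ∪ M ⊆ M :=
    hM.2 ⟨bigGerm hd hMg, hGsub.trans subset_union_right⟩ subset_union_right
  have hbasis : ∀ k, basisDist d k ∈ M := fun k => hbig (Or.inl (Or.inl ⟨k, rfl⟩))
  have hinb : inBall d ⊆ M := fun z hz => hbig (Or.inl (Or.inr hz))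
  refine ⟨M, ⟨?_, ?_⟩, hGsub⟩
  · intro p hp
    exact ⟨hMg.1 hp, mem_outBall_of_norm hd (hMg.1 hp).1 (germ_norm hd hMg hp)⟩
  · apply Set.Subset.antisymm
    · intro p hp
      exact ⟨(hMg.1 hp).1, fun v hv => (hMg.2 p hp v hv).1⟩
    · intro u hu
      have huH : u ∈ Hs d := hu.1
      have hupos : ∀ i, 0 ≤ u i := key_pos hd huH (fun k => hu.2 _ (hbasis k))
      have hunorm : ‖u - cpt d‖ ≤ rov d := key_ball hd huH (fun z hz => hu.2 z (hinb hz))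
      have hins : insert u M ⊆ M :=
        hM.2 ⟨insert_germ hd hMg ⟨huH, hupos⟩ (mem_outBall_of_norm hd huH hunorm) hu,
          hGsub.trans (subset_insert _ _)⟩ (subset_insert _ _)
      exact hins (mem_insert _ _)

/-! ### the sets K and E -/

lemma qplex_closed {Q : Set (V d)} (hQ : IsQplex d Q) : IsClosed Q := by
  rw [hQ.2]; exact polar_closed Q

lemma qplex_convex {Q : Set (V d)} (hQ : IsQplex d Q) : Convex ℝ Q := by
  rw [hQ.2]; exact polar_convex Q

lemma basis_mem_polar {A : Set (V d)} (hA : A ⊆ probSimplex d) (k : Fin (d^2)) :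
    basisDist d k ∈ polar d A :=
  ⟨basis_mem_Hs hd k, fun v hv => lower_basis hd (hA hv) k⟩

lemma inBall_sub_polar {A : Set (V d)} (hA : A ⊆ probSimplex d ∩ outBall d) :
    inBall d ⊆ polar d A := fun z hz =>
  ⟨hz.1, fun v hv => lower_inBall hd hz ((hA hv).1.1) (outBall_norm hd (hA hv).2)⟩

lemma K_sub_qplex {G Q : Set (V d)} (hG : IsGerm d G) (hQ : IsQplex d Q) (hGQ : G ⊆ Q) :
    cc d (basisSimplex d ∪ inBall d ∪ G) ⊆ Q := by
  apply closure_minimal ?_ (qplex_closed hd hQ)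
  apply convexHull_min ?_ (qplex_convex hd hQ)
  rintro x ((hx | hx) | hx)
  · have hb : Set.range (basisDist d) ⊆ Q := by
      rintro _ ⟨k, rfl⟩
      rw [hQ.2]
      exact basis_mem_polar hd (fun v hv => (hQ.1 hv).1) k
    exact convexHull_min hb (qplex_convex hd hQ) hx
  · rw [hQ.2]; exact inBall_sub_polar hd hQ.1 hx
  · exact hGQ hx

lemma basis_mem_K {G : Set (V d)} (k : Fin (d^2)) :
    basisDist d k ∈ cc d (basisSimplex d ∪ inBall d ∪ G) :=
  subset_closure (subset_convexHull _ _ (Or.inl (Or.inl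
    (subset_convexHull _ _ (Set.mem_range_self k)))))

lemma inBall_sub_K {G : Set (V d)} :
    inBall d ⊆ cc d (basisSimplex d ∪ inBall d ∪ G) := fun z hz =>
  subset_closure (subset_convexHull _ _ (Or.inl (Or.inr hz)))

lemma G_sub_K {G : Set (V d)} : G ⊆ cc d (basisSimplex d ∪ inBall d ∪ G) := fun p hp =>
  subset_closure (subset_convexHull _ _ (Or.inr hp))

lemma polar_K_sub_E {G : Set (V d)} (hG : IsGerm d G) :
    polar d (cc d (basisSimplex d ∪ inBall d ∪ G)) ⊆
      probSimplex d ∩ outBall d ∩ polar d G := by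
  intro u hu
  have huH : u ∈ Hs d := hu.1
  have hupos : ∀ i, 0 ≤ u i := key_pos hd huH (fun k => hu.2 _ (basis_mem_K hd k))
  have hunorm : ‖u - cpt d‖ ≤ rov d := key_ball hd huH (fun z hz => hu.2 z (inBall_sub_K hd hz))
  exact ⟨⟨⟨huH, hupos⟩, mem_outBall_of_norm hd huH hunorm⟩,
    ⟨huH, fun p hp => hu.2 p (G_sub_K hd hp)⟩⟩

lemma E_sub_polar_K {G : Set (V d)} (hG : IsGerm d G) :
    probSimplex d ∩ outBall d ∩ polar d G ⊆
      polar d (cc d (basisSimplex d ∪ inBall d ∪ G)) := by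
  intro u hu
  have huH : u ∈ Hs d := hu.1.1.1
  have hunorm : ‖u - cpt d‖ ≤ rov d := outBall_norm hd hu.1.2
  refine ⟨huH, ?_⟩
  have hsub : cc d (basisSimplex d ∪ inBall d ∪ G) ⊆ {v : V d | LL d ≤ ⟪u, v⟫} := by
    apply closure_minimal ?_ (halfspace_closed u (LL d))
    apply convexHull_min ?_ (halfspace_convex u (LL d))
    rintro x ((hx | hx) | hx)
    · refine convexHull_min ?_ (halfspace_convex u (LL d)) hx
      rintro _ ⟨k, rfl⟩
      show LL d ≤ ⟪u, basisDist d k⟫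
      have := lower_basis hd ⟨huH, hu.1.1.2⟩ k
      rw [ip_comm] at this
      exact this
    · show LL d ≤ ⟪u, x⟫
      have := lower_inBall hd hx huH hunorm
      rw [ip_comm] at this
      exact this
    · exact hu.2.2 x hx
  exact fun v hv => hsub hv

lemma K_sub_polar_E {G : Set (V d)} (hG : IsGerm d G) :
    cc d (basisSimplex d ∪ inBall d ∪ G) ⊆
      polar d (probSimplex d ∩ outBall d ∩ polar d G) := by
  apply closure_minimal ?_ (polar_closed _)
  apply convexHull_min ?_ (polar_convex _)
  rintro x ((hx | hx) | hx)
  · refine convexHull_min ?_ (polar_convex _) hx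
    rintro _ ⟨k, rfl⟩
    exact basis_mem_polar hd (fun v hv => hv.1.1) k
  · exact inBall_sub_polar hd (fun v hv => hv.1) hx
  · refine ⟨(hG.1 hx).1, fun v hv => ?_⟩
    rw [ip_comm]
    exact hv.2.2 x hx

/-! ### separation: polar E ⊆ K -/

omit hd in
lemma sum_cpt : ∑ i : Fin (d^2), cpt d i = ((d:ℝ)^2) * (1/(d:ℝ)^2) := by
  simp [cpt, Finset.sum_const, Finset.card_univ]

lemma mm_mul : ((d:ℝ)+1) * mm d = 1/(d:ℝ)^2 := by
  have h0 := dR0 hd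
  unfold mm
  field_simp

lemma polar_E_sub_K {G : Set (V d)} (hG : IsGerm d G) :
    polar d (probSimplex d ∩ outBall d ∩ polar d G) ⊆
      cc d (basisSimplex d ∪ inBall d ∪ G) := by
  intro u hu
  by_contra hK
  have h0 := dR0 hd
  have hD2 : (0:ℝ) < (d:ℝ)^2 := by positivity
  have hKconv : Convex ℝ (cc d (basisSimplex d ∪ inBall d ∪ G)) := (convex_convexHull ℝ _).closure
  have hKclosed : IsClosed (cc d (basisSimplex d ∪ inBall d ∪ G)) := isClosed_closure
  obtain ⟨f, β, hfu, hfK⟩ := geometric_hahn_banach_point_closed hKconv hKclosed hK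
  set w0 : V d := (InnerProductSpace.toDual ℝ (V d)).symm f with hw0
  have hw0app : ∀ y, ⟪w0, y⟫ = f y := fun y => InnerProductSpace.toDual_symm_apply
  set σ : ℝ := ∑ i, w0 i with hσ
  set w : V d := w0 - σ • cpt d with hwdef
  have hwapp : ∀ i, w i = w0 i - σ * cpt d i := by
    intro i
    rw [hwdef, PiLp.sub_apply, PiLp.smul_apply, smul_eq_mul]
  have hwc : ⟪w, cpt d⟫ = 0 := by
    have h1 : ⟪w0, cpt d⟫ = σ / (d:ℝ)^2 := ip_cpt w0
    rw [hwdef, inner_sub_left, real_inner_smul_left, h1,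
      inner_cpt_right (cpt_mem_Hs hd)]
    field_simp
    ring
  have hwsum : ∑ i, w i = 0 := by
    rw [Finset.sum_congr rfl (fun i _ => hwapp i), Finset.sum_sub_distrib,
      ← Finset.mul_sum, sum_cpt]
    field_simp
    rw [hσ, sub_self]
  set γ : ℝ := σ / (d:ℝ)^2 with hγ
  have hwy : ∀ y : V d, y ∈ Hs d → ⟪w, y⟫ = f y - γ := by
    intro y hy
    rw [hwdef, inner_sub_left, real_inner_smul_left, inner_cpt_left hy, hw0app, hγ]
    ring
  set α : ℝ := β - γ with hα
  have hKsubHs : cc d (basisSimplex d ∪ inBall d ∪ G) ⊆ Hs d :=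
    (K_sub_polar_E hd hG).trans (polar_subset_Hs _)
  have hfK' : ∀ y ∈ cc d (basisSimplex d ∪ inBall d ∪ G), α < ⟪w, y⟫ := by
    intro y hy
    rw [hwy y (hKsubHs hy), hα]
    have := hfK y hy
    linarith
  have huH : u ∈ Hs d := hu.1
  have hu' : ⟪w, u⟫ < α := by
    rw [hwy u huH, hα]; linarith
  -- w ≠ 0
  have hcK : cpt d ∈ cc d (basisSimplex d ∪ inBall d ∪ G) :=
    inBall_sub_K hd (cpt_mem_inBall hd)
  have hwne : w ≠ 0 := by
    intro h
    have h1 := hfK' (cpt d) hcK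
    rw [h, inner_zero_left] at h1
    rw [h, inner_zero_left] at hu'
    linarith
  have hwn : (0:ℝ) < ‖w‖ := norm_pos_iff.mpr hwne
  -- the in-ball point in direction -w
  have hz1 : α < -(riv d * ‖w‖) := by
    set z1 : V d := cpt d - (riv d / ‖w‖) • w with hz1def
    have hz1H : z1 ∈ Hs d := by
      show ⟪z1, cpt d⟫ = 1/(d:ℝ)^2
      rw [hz1def, inner_sub_left, real_inner_smul_left, hwc,
        inner_cpt_right (cpt_mem_Hs hd)]
      ring
    have hz1c : z1 - cpt d = (-(riv d / ‖w‖)) • w := by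
      rw [hz1def, neg_smul]; abel
    have hz1norm : ‖z1 - cpt d‖ = riv d := by
      rw [hz1c, norm_smul, norm_neg, Real.norm_eq_abs,
        abs_of_pos (div_pos (riv_pos hd) hwn), div_mul_cancel₀ _ (ne_of_gt hwn)]
    have hz1B : z1 ∈ inBall d := by
      refine ⟨hz1H, ?_⟩
      show ‖z1 - cpt d‖^2 ≤ 1/((d:ℝ)^2*((d:ℝ)^2-1))
      rw [hz1norm, riv_sq hd]
      exact le_rfl
    have := hfK' z1 (inBall_sub_K hd hz1B)
    rw [hz1def, inner_sub_right, real_inner_smul_right, hwc,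
      real_inner_self_eq_norm_sq, zero_sub] at this
    have e : riv d / ‖w‖ * ‖w‖^2 = riv d * ‖w‖ := by field_simp
    linarith
  have hαneg : α < 0 := lt_of_lt_of_le hz1 (by nlinarith [riv_pos hd])
  -- basis coordinates
  have hbk : ∀ k, α < w k / ((d:ℝ)+1) := by
    intro k
    have h1 := hfK' (basisDist d k) (basis_mem_K hd k)
    have h2 : ⟪w, basisDist d k⟫ = w k / ((d:ℝ)+1) := by
      have := ip_basis_general hd w k
      rw [hwsum] at this
      simpa [ip] using this
    rw [h2] at h1
    exact h1
  -- construct the separating point z ∈ E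
  set s : ℝ := mm d / (-α) with hsdef
  have hspos : 0 < s := div_pos (mm_pos hd) (by linarith)
  have hna : -α ≠ 0 := by linarith
  have hsα : s * α = -(mm d) := by
    rw [hsdef]; field_simp
    rw [mul_div_assoc, div_self (show α ≠ 0 by linarith), mul_one]
  set z : V d := cpt d + s • w with hzdef
  have hzH : z ∈ Hs d := by
    show ⟪z, cpt d⟫ = 1/(d:ℝ)^2
    rw [hzdef, inner_add_left, real_inner_smul_left, hwc,
      inner_cpt_right (cpt_mem_Hs hd)]
    ring
  have hzapp : ∀ i, z i = 1/(d:ℝ)^2 + s * w i := by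
    intro i
    rw [hzdef, PiLp.add_apply, PiLp.smul_apply, smul_eq_mul]
    rfl
  have hzpos : ∀ i, 0 ≤ z i := by
    intro i
    rw [hzapp i]
    have h1 := hbk i
    rw [lt_div_iff₀ (by linarith : (0:ℝ) < (d:ℝ)+1)] at h1
    have h2 : s * (α * ((d:ℝ)+1)) ≤ s * w i := le_of_lt (mul_lt_mul_of_pos_left h1 hspos)
    have h3 : s * (α * ((d:ℝ)+1)) = -(((d:ℝ)+1) * mm d) := by
      rw [← mul_assoc, hsα]; ring
    rw [mm_mul hd] at h3
    have h4 : -(1/(d:ℝ)^2) ≤ s * w i := by rw [← h3]; exact h2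
    linarith [h4]
  have hzc : z - cpt d = s • w := by rw [hzdef]; abel
  have hznorm : ‖z - cpt d‖ ≤ rov d := by
    rw [hzc, norm_smul, Real.norm_eq_abs, abs_of_pos hspos, hsdef, div_mul_eq_mul_div,
      div_le_iff₀ (by linarith : (0:ℝ) < -α)]
    nlinarith [rov_pos hd, riv_mul_rov hd, hz1]
  have hzG : z ∈ polar d G := by
    refine ⟨hzH, fun p hp => ?_⟩
    have hpH : p ∈ Hs d := (hG.1 hp).1
    have h1 := hfK' p (G_sub_K hd hp)
    have h2 : ip z p = 1/(d:ℝ)^2 + s * ⟪w, p⟫ := by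
      show ⟪z, p⟫ = _
      rw [hzdef, inner_add_left, real_inner_smul_left, inner_cpt_left hpH]
    show LL d ≤ ip z p
    rw [h2, LL_eq hd]
    have h3 : s * α ≤ s * ⟪w, p⟫ := le_of_lt (mul_lt_mul_of_pos_left h1 hspos)
    rw [hsα] at h3
    linarith
  have hzE : z ∈ probSimplex d ∩ outBall d ∩ polar d G :=
    ⟨⟨⟨hzH, hzpos⟩, mem_outBall_of_norm hd hzH hznorm⟩, hzG⟩
  have hfin : LL d ≤ ip u z := hu.2 z hzE
  have h2 : ip u z = 1/(d:ℝ)^2 + s * ⟪w, u⟫ := by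
    show ⟪u, z⟫ = _
    rw [hzdef, inner_add_right, real_inner_smul_right, inner_cpt_right huH,
      real_inner_comm u w]
  have h3 : s * ⟪w, u⟫ < s * α := mul_lt_mul_of_pos_left hu' hspos
  rw [hsα] at h3
  rw [h2, LL_eq hd] at hfin
  linarith

/-! ### main assembly -/

lemma polar_K_eq_E {G : Set (V d)} (hG : IsGerm d G) :
    polar d (cc d (basisSimplex d ∪ inBall d ∪ G)) =
      probSimplex d ∩ outBall d ∩ polar d G :=
  Set.Subset.antisymm (polar_K_sub_E hd hG) (E_sub_polar_K hd hG)

lemma polar_E_eq_K {G : Set (V d)} (hG : IsGerm d G) :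
    polar d (probSimplex d ∩ outBall d ∩ polar d G) =
      cc d (basisSimplex d ∪ inBall d ∪ G) :=
  Set.Subset.antisymm (polar_E_sub_K hd hG) (K_sub_polar_E hd hG)

lemma mem_stem {G x : _} : x ∈ stem d G ↔ ∀ Q, IsQplex d Q → G ⊆ Q → x ∈ Q := by
  simp [stem]

lemma stem_eq {G : Set (V d)} (hG : IsGerm d G) :
    stem d G = cc d (basisSimplex d ∪ inBall d ∪ G) := by
  apply Set.Subset.antisymm
  · intro x hx
    rw [mem_stem hd] at hx
    by_contra hK
    obtain ⟨Q0, hQ0, hGQ0⟩ := exists_qplex hd hG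
    have hxH : x ∈ Hs d := ((hQ0.1 (hx Q0 hQ0 hGQ0)).1).1
    have hxpE : x ∉ polar d (probSimplex d ∩ outBall d ∩ polar d G) := by
      rw [polar_E_eq_K hd hG]; exact hK
    have hex : ∃ z ∈ probSimplex d ∩ outBall d ∩ polar d G, ip x z < LL d := by
      by_contra h
      push_neg at h
      exact hxpE ⟨hxH, fun v hv => h v hv⟩
    obtain ⟨z, hzE, hzlt⟩ := hex
    have hins := insert_germ hd hG hzE.1.1 hzE.1.2 hzE.2
    obtain ⟨Q, hQ, hinsQ⟩ := exists_qplex hd hins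
    have hGQ : G ⊆ Q := (subset_insert z G).trans hinsQ
    have hxQ : x ∈ polar d Q := by rw [← hQ.2]; exact hx Q hQ hGQ
    have := hxQ.2 z (hinsQ (mem_insert _ _))
    have hLL : LL d ≤ ip x z := this
    linarith
  · intro x hx
    rw [mem_stem hd]
    intro Q hQ hGQ
    exact K_sub_qplex hd hG hQ hGQ hx

lemma envl_eq {G : Set (V d)} (hG : IsGerm d G) :
    envl d G = probSimplex d ∩ outBall d ∩ polar d G := by
  apply Set.Subset.antisymm
  · intro x hx
    simp only [envl, Set.mem_iUnion, Set.mem_setOf_eq] at hx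
    obtain ⟨Q, ⟨hQ, hGQ⟩, hxQ⟩ := hx
    have hxp : x ∈ polar d Q := by rw [← hQ.2]; exact hxQ
    exact ⟨hQ.1 hxQ, polar_anti hGQ hxp⟩
  · intro z hz
    have hins := insert_germ hd hG hz.1.1 hz.1.2 hz.2
    obtain ⟨Q, hQ, hinsQ⟩ := exists_qplex hd hins
    simp only [envl, Set.mem_iUnion, Set.mem_setOf_eq]
    exact ⟨Q, ⟨hQ, (subset_insert _ _).trans hinsQ⟩, hinsQ (mem_insert _ _)⟩

omit hd in
lemma empty_germ : IsGerm d (∅ : Set (V d)) :=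
  ⟨empty_subset _, fun p hp => absurd hp (notMem_empty p)⟩

omit hd in
lemma polar_empty : polar d (∅ : Set (V d)) = Hs d := by
  ext u
  exact ⟨fun h => h.1, fun h => ⟨h, fun v hv => absurd hv (notMem_empty v)⟩⟩

end QP

open QP in
theorem statement6' (d : ℕ) (hd : 2 ≤ d) (G : Set (V d)) (hG : IsGerm d G) :
    stem d G = cc d (basisSimplex d ∪ inBall d ∪ G) ∧
    envl d G = probSimplex d ∩ outBall d ∩ polar d G ∧
    polar d (stem d G) = envl d G ∧
    polar d (envl d G) = stem d G ∧
    stem d (∅ : Set (V d)) = cc d (basisSimplex d ∪ inBall d) ∧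
    envl d (∅ : Set (V d)) = probSimplex d ∩ outBall d := by
  refine ⟨stem_eq hd hG, envl_eq hd hG, ?_, ?_, ?_, ?_⟩
  · rw [stem_eq hd hG, envl_eq hd hG, polar_K_eq_E hd hG]
  · rw [stem_eq hd hG, envl_eq hd hG, polar_E_eq_K hd hG]
  · rw [stem_eq hd empty_germ, Set.union_empty]
  · rw [envl_eq hd empty_germ, polar_empty]
    apply Set.Subset.antisymm
    · exact fun x hx => hx.1
    · exact fun x hx => ⟨hx, hx.1.1⟩


/-- 𝒮(G) = cc(Δ_e ∪ B_i ∪ G), ℰ(G) = Δ ∩ B_o ∩ G*, these are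
mutually polar, and in particular 𝒮 = cc(Δ_e ∪ B_i) and ℰ = Δ ∩ B_o. -/
theorem statement6 (d : ℕ) (hd : 2 ≤ d) (G : Set (V d)) (hG : IsGerm d G) :
    stem d G = cc d (basisSimplex d ∪ inBall d ∪ G) ∧
    envl d G = probSimplex d ∩ outBall d ∩ polar d G ∧
    polar d (stem d G) = envl d G ∧
    polar d (envl d G) = stem d G ∧
    stem d (∅ : Set (V d)) = cc d (basisSimplex d ∪ inBall d) ∧
    envl d (∅ : Set (V d)) = probSimplex d ∩ outBall d := by
  exact statement6' d hd G hG
end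
end

section
/- Let p₁, …, p_m be vectors in H such that ⟨p_k, p_k⟩ = 2/(d(d+1)) for every k, and ⟨p_k, p_l⟩ = 1/(d(d+1)) for all k ≠ l (a set of mutually maximally distant pure vectors). Then m ≤ d. -/
noncomputable section

/-- a set of mutually maximally distant pure vectors in H has at
most d elements. -/
theorem statement12 (d m : ℕ) (hd : 2 ≤ d) (p : Fin m → V d)
    (hH : ∀ k, p k ∈ Hs d)
    (hpure : ∀ k, ip (p k) (p k) = 2/((d:ℝ)*((d:ℝ)+1)))
    (hmmd : ∀ k l, k ≠ l → ip (p k) (p l) = 1/((d:ℝ)*((d:ℝ)+1))) :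
    m ≤ d := by
  by_contra hcon
  push_neg at hcon
  have hd0 : (0:ℝ) < d := by
    have : (2:ℝ) ≤ d := by exact_mod_cast hd
    linarith
  have hm0 : (0:ℝ) < m := by
    have : d < m := hcon
    have : (d:ℝ) < m := by exact_mod_cast this
    linarith
  set α : ℝ := 1/((d:ℝ)*((d:ℝ)+1)) with hα
  have hcc : ip (cpt d) (cpt d) = 1/((d:ℝ)^2) := by
    simp only [ip, cpt, PiLp.inner_apply, PiLp.toLp_apply, RCLike.inner_apply, starRingEnd_apply, star_trivial,
      Finset.sum_const, Finset.card_fin, nsmul_eq_mul]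
    push_cast
    field_simp
  have hpc : ∀ k, ip (p k) (cpt d) = 1/((d:ℝ)^2) := by
    intro k
    have := hH k
    simpa [Hs] using this
  set x : V d := (∑ k, p k) - (m:ℝ) • cpt d with hxdef
  have hss : (inner ℝ (∑ k, p k) (∑ l, p l) : ℝ) = (m:ℝ) * ((m:ℝ) + 1) * α := by
    rw [sum_inner]
    have : ∀ k : Fin m, (inner ℝ (p k) (∑ l, p l) : ℝ) = (m:ℝ) * α + α := by
      intro k
      rw [inner_sum]
      have h2 : ∀ l : Fin m, (inner ℝ (p k) (p l) : ℝ) = α + (if k = l then α else 0) := by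
        intro l
        by_cases h : k = l
        · subst h
          have := hpure k
          simp only [ip] at this
          rw [this, if_pos rfl, hα]
          ring
        · have := hmmd k l h
          simp only [ip] at this
          simp [this, h, hα]
      simp only [h2]
      rw [Finset.sum_add_distrib]
      simp [Finset.sum_ite_eq, mul_comm]
    simp only [this]
    rw [Finset.sum_const]
    simp [Finset.card_fin, nsmul_eq_mul]
    ring
  have hsc : (inner ℝ (∑ k, p k) ((m:ℝ) • cpt d) : ℝ) = (m:ℝ)^2 / ((d:ℝ)^2) := by
    rw [inner_smul_right, sum_inner]
    have : ∀ k : Fin m, (inner ℝ (p k) (cpt d) : ℝ) = 1/((d:ℝ)^2) := by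
      intro k; have := hpc k; simpa [ip] using this
    simp only [this]
    rw [Finset.sum_const]
    simp [nsmul_eq_mul]
    ring
  have hccm : (inner ℝ ((m:ℝ) • cpt d) ((m:ℝ) • cpt d) : ℝ) = (m:ℝ)^2 / ((d:ℝ)^2) := by
    rw [inner_smul_left, inner_smul_right]
    have := hcc
    simp only [ip] at this
    rw [real_inner_self_eq_norm_sq] at this
    simp [this]
    ring
  have hcs : (inner ℝ ((m:ℝ) • cpt d) (∑ k, p k) : ℝ) = (m:ℝ)^2 / ((d:ℝ)^2) := by
    rw [real_inner_comm]; exact hsc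
  have hxx : (inner ℝ x x : ℝ) = (m:ℝ) * ((m:ℝ) + 1) * α - (m:ℝ)^2 / ((d:ℝ)^2) := by
    rw [hxdef, inner_sub_sub_self, hss, hsc, hcs, hccm]
    ring
  have hnn : (0:ℝ) ≤ inner ℝ x x := real_inner_self_nonneg
  rw [hxx, hα] at hnn
  have hdm : (d:ℝ) < m := by exact_mod_cast hcon
  have hd1 : (0:ℝ) < (d:ℝ) * ((d:ℝ) + 1) := by positivity
  have hle : (m:ℝ)^2 / ((d:ℝ)^2) ≤ (m:ℝ) * ((m:ℝ) + 1) / ((d:ℝ) * ((d:ℝ) + 1)) := by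
    have : (m:ℝ) * ((m:ℝ) + 1) * (1 / ((d:ℝ) * ((d:ℝ) + 1))) = (m:ℝ) * ((m:ℝ) + 1) / ((d:ℝ) * ((d:ℝ) + 1)) := by ring
    linarith [hnn, this.symm ▸ hnn]
  rw [div_le_div_iff₀ (by positivity) hd1] at hle
  nlinarith [hle, mul_pos (mul_pos hm0 hd0) (sub_pos.mpr hdm)]
end
end

section
/- If Q is a qplex whose intersection with the out-sphere S_o is infinite (i.e. Q contains infinitely many pure points), then no polytope inscribed in Q contains the in-sphere: for every finite set F ⊆ Q, the convex hull of F does not contain S_i. -/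
noncomputable section

/-- if a qplex has infinitely many pure points, no inscribed
polytope contains the in-sphere. -/
theorem statement13 (d : ℕ) (hd : 2 ≤ d) (Q : Set (V d)) (hQ : IsQplex d Q)
    (hinf : (Q ∩ outSphere d).Infinite)
    (F : Set (V d)) (hF : F ⊆ Q) (hfin : F.Finite) :
    ¬ inSphere d ⊆ convexHull ℝ F := by
  classical
  intro hsub
  have hd2 : (2:ℝ) ≤ (d:ℝ) := by exact_mod_cast hd
  have hd0 : (d:ℝ) ≠ 0 := by linarith
  have hd1 : (d:ℝ) - 1 ≠ 0 := by intro h; linarith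
  have hdp : (d:ℝ) + 1 ≠ 0 := by intro h; linarith
  have hd21 : (d:ℝ)^2 - 1 ≠ 0 := by nlinarith
  set m : ℝ := 1/((d:ℝ)*((d:ℝ)+1)) with hm
  -- inner product of the barycenter with itself
  have hcc : (inner ℝ (cpt d) (cpt d) : ℝ) = 1/((d:ℝ)^2) := by
    simp only [cpt, PiLp.inner_apply, RCLike.inner_apply, conj_trivial]
    rw [Finset.sum_const, Finset.card_univ, Fintype.card_fin]
    rw [nsmul_eq_mul]
    push_cast
    field_simp
  -- membership facts for points of Q
  have hHs : ∀ p ∈ Q, ip p (cpt d) = 1/((d:ℝ)^2) := fun p hp => (hQ.1 hp).1.1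
  have hpolar : ∀ p ∈ Q, ∀ v ∈ Q, m ≤ ip p v := by
    intro p hp v hv
    rw [hQ.2] at hp
    exact hp.2 v hv
  -- the antipodal map
  set P : V d → V d := fun p => cpt d - ((d:ℝ)-1)⁻¹ • (p - cpt d) with hP
  have hinnerc : ∀ p ∈ Q, inner ℝ p (cpt d) = 1/((d:ℝ)^2) := fun p hp => hHs p hp
  -- P p lies on the in-sphere for p ∈ Q ∩ outSphere
  have hPin : ∀ p ∈ Q ∩ outSphere d, P p ∈ inSphere d := by
    rintro p ⟨hpQ, hpH, hpS⟩
    have h1 : inner ℝ p (cpt d) = 1/((d:ℝ)^2) := hHs p hpQ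
    have h2 : inner ℝ p p = 2/((d:ℝ)*((d:ℝ)+1)) := hpS
    constructor
    · show ip (P p) (cpt d) = _
      simp only [ip, hP]
      rw [inner_sub_left, real_inner_smul_left, inner_sub_left, h1, hcc]
      ring
    · have hc2 : (inner ℝ (cpt d) p : ℝ) = 1/((d:ℝ)^2) := by
        rw [real_inner_comm]; exact h1
      have hsq : ‖p - cpt d‖^2 = ((d:ℝ)-1)/((d:ℝ)^2*((d:ℝ)+1)) := by
        rw [← real_inner_self_eq_norm_sq, inner_sub_left, inner_sub_right,
          inner_sub_right, h2, h1, hc2, hcc]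
        field_simp
        ring
      have hPc : P p - cpt d = -(((d:ℝ)-1)⁻¹ • (p - cpt d)) := by
        simp only [hP]; abel
      rw [hPc, norm_neg, norm_smul, mul_pow, hsq]
      rw [Real.norm_eq_abs, sq_abs]
      field_simp
      ring
  -- key equality ⟨p, P p⟩ = m
  have hipP : ∀ p ∈ Q ∩ outSphere d, ip p (P p) = m := by
    rintro p ⟨hpQ, hpH, hpS⟩
    have h1 : inner ℝ p (cpt d) = 1/((d:ℝ)^2) := hHs p hpQ
    have h2 : inner ℝ p p = 2/((d:ℝ)*((d:ℝ)+1)) := hpS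
    show inner ℝ p (P p) = m
    simp only [hP]
    rw [inner_sub_right, real_inner_smul_right, inner_sub_right, h1, h2, hm]
    field_simp
    ring
  -- finite representation over F
  set Fs : Finset (V d) := hfin.toFinset with hFs
  have hFcoe : (Fs : Set (V d)) = F := hfin.coe_toFinset
  have hrep : ∀ p ∈ Q ∩ outSphere d, ∃ w : V d → ℝ,
      (∀ f ∈ Fs, 0 ≤ w f) ∧ ∑ f ∈ Fs, w f = 1 ∧ ∑ f ∈ Fs, w f • f = P p := by
    intro p hp
    have : P p ∈ convexHull ℝ (Fs : Set (V d)) := by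
      rw [hFcoe]; exact hsub (hPin p hp)
    rw [Finset.convexHull_eq] at this
    obtain ⟨w, hw0, hw1, hwc⟩ := this
    refine ⟨w, hw0, hw1, ?_⟩
    rw [← hwc, Finset.centerMass_eq_of_sum_1 _ _ hw1]
    simp
  choose! w hw0 hw1 hwP using hrep
  -- equality forcing: on the support of w p, inner products equal m
  have hforce : ∀ p ∈ Q ∩ outSphere d, ∀ f ∈ Fs, w p f ≠ 0 → ip p f = m := by
    intro p hp f hf hwf
    have hsum : ∑ g ∈ Fs, w p g * ip p g = m := by
      have := hipP p hp
      rw [← hwP p hp] at this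
      rw [← this, ip, inner_sum]
      refine Finset.sum_congr rfl fun g _ => ?_
      rw [real_inner_smul_right]; rfl
    have hterm : ∀ g ∈ Fs, 0 ≤ w p g * (ip p g - m) := by
      intro g hg
      have hgQ : g ∈ Q := hF (hfin.mem_toFinset.1 hg)
      have := hpolar p hp.1 g hgQ
      have := hw0 p hp g hg
      nlinarith [hpolar p hp.1 g hgQ, hw0 p hp g hg]
    have hzero : ∑ g ∈ Fs, w p g * (ip p g - m) = 0 := by
      have hexp : ∑ g ∈ Fs, w p g * (ip p g - m)
          = (∑ g ∈ Fs, w p g * ip p g) - (∑ g ∈ Fs, w p g) * m := by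
        rw [Finset.sum_mul, ← Finset.sum_sub_distrib]
        exact Finset.sum_congr rfl fun g _ => by ring
      rw [hexp, hsum, hw1 p hp, one_mul, sub_self]
    have := (Finset.sum_eq_zero_iff_of_nonneg hterm).1 hzero f hf
    rcases mul_eq_zero.1 this with h | h
    · exact absurd h hwf
    · linarith [sub_eq_zero.1 h]
  -- pigeonhole on supports
  have hmaps : Set.MapsTo (fun p => Fs.filter (fun f => w p f ≠ 0))
      (Q ∩ outSphere d) (↑Fs.powerset : Set (Finset (V d))) := by
    intro p _
    simp only [Finset.coe_powerset, Set.mem_preimage, Set.mem_powerset_iff,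
      Finset.mem_coe, Finset.mem_powerset]
    exact Finset.filter_subset _ _
  obtain ⟨p, hp, q, hq, hne, heq⟩ :=
    hinf.exists_ne_map_eq_of_mapsTo hmaps (Fs.powerset).finite_toSet
  -- for f in the common support, ⟨p-q, f⟩ = 0
  have hdiff : ∀ f ∈ Fs, w p f ≠ 0 → (inner ℝ (p - q) f : ℝ) = 0 := by
    intro f hf hwf
    have hfq : w q f ≠ 0 := by
      have : f ∈ Fs.filter (fun g => w q g ≠ 0) := by
        rw [← heq]; exact Finset.mem_filter.2 ⟨hf, hwf⟩
      exact (Finset.mem_filter.1 this).2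
    have h1 : ip p f = m := hforce p hp f hf hwf
    have h2 : ip q f = m := hforce q hq f hf hfq
    rw [inner_sub_left]
    show ip p f - ip q f = 0
    rw [h1, h2, sub_self]
  have hdiffc : (inner ℝ (p - q) (cpt d) : ℝ) = 0 := by
    rw [inner_sub_left]
    show ip p (cpt d) - ip q (cpt d) = 0
    rw [hHs p hp.1, hHs q hq.1, sub_self]
  -- ⟨p-q, P r⟩ = 0 for r = p, q
  have hPzero : ∀ r ∈ Q ∩ outSphere d, Fs.filter (fun f => w r f ≠ 0) =
      Fs.filter (fun f => w p f ≠ 0) → (inner ℝ (p - q) (P r) : ℝ) = 0 := by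
    intro r hr hrsupp
    rw [← hwP r hr, inner_sum]
    refine Finset.sum_eq_zero fun f hf => ?_
    rw [real_inner_smul_right]
    by_cases hwf : w r f = 0
    · rw [hwf]; ring
    · have : f ∈ Fs.filter (fun g => w p g ≠ 0) := by
        rw [← hrsupp]; exact Finset.mem_filter.2 ⟨hf, hwf⟩
      rw [hdiff f hf (Finset.mem_filter.1 this).2]; ring
  have hPp : (inner ℝ (p - q) (P p) : ℝ) = 0 := hPzero p hp rfl
  have hPq : (inner ℝ (p - q) (P q) : ℝ) = 0 := hPzero q hq heq.symm
  -- deduce ⟨p-q, p⟩ = 0 and ⟨p-q, q⟩ = 0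
  have hexp : ∀ r : V d, (inner ℝ (p - q) (P r) : ℝ)
      = inner ℝ (p-q) (cpt d) - ((d:ℝ)-1)⁻¹ * ((inner ℝ (p-q) r : ℝ) - inner ℝ (p-q) (cpt d)) := by
    intro r
    simp only [hP]
    rw [inner_sub_right, real_inner_smul_right, inner_sub_right]
  have hkey : ∀ r : V d, (inner ℝ (p - q) (P r) : ℝ) = 0 →
      (inner ℝ (p - q) r : ℝ) = 0 := by
    intro r h
    have h2 := hexp r
    rw [h, hdiffc, sub_zero, zero_sub, eq_comm, neg_eq_zero] at h2
    exact (mul_eq_zero.1 h2).resolve_left (inv_ne_zero hd1)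
  have hp0 : (inner ℝ (p - q) p : ℝ) = 0 := hkey p hPp
  have hq0 : (inner ℝ (p - q) q : ℝ) = 0 := hkey q hPq
  have : (inner ℝ (p - q) (p - q) : ℝ) = 0 := by
    rw [inner_sub_right, hp0, hq0, sub_self]
  exact hne (sub_eq_zero.1 (inner_self_eq_zero.1 this))
end
end
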